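/- arXiv:2208.11869 — 2 statements merged into one kernel-verified Lean document; each statement's English description precedes it below -/
import Mathlib

section
/- Suppose σ ∈ X satisfies H(σ) − H(𝟐) ≤ Γ* and N₁(σ) ≤ ℓ*². Then the projection sending every spin 1 to spin 2 does not increase the energy: H(P^{12}σ) ≤ H(σ); moreover equality holds if and only if N₁(σ) = 0. -/
namespace GenPotts

/-- Spin values: `0` represents spin `1`, `1` represents spin `2`, `2` represents spin `3`. -/
abbrev Spin := Fin 3

/-- Vertices of the two-dimensional discrete torus. -/
abbrev Vtx (K L : ℕ) := ZMod K × ZMod L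

/-- Spin configurations. -/
abbrev Config (K L : ℕ) := Vtx K L → Spin

section Defs

variable (K L : ℕ)

/-- The constant configuration with all spins equal to `r`. -/
def const (r : Spin) : Config K L := fun _ => r

variable [NeZero K] [NeZero L]

/-- The number of (unordered nearest-neighbour) edges of the torus whose endpoint spins are
`i` and `j`.  Each edge is represented exactly once as a pair (vertex, direction), where the
direction `true` points right and `false` points up. -/
def nEdge (σ : Config K L) (i j : Spin) : ℕ :=
  ((Finset.univ : Finset (Vtx K L × Bool)).filter (fun p =>
    (σ p.1 = i ∧ σ (if p.2 then (p.1.1 + 1, p.1.2) else (p.1.1, p.1.2 + 1)) = j) ∨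
    (σ p.1 = j ∧ σ (if p.2 then (p.1.1 + 1, p.1.2) else (p.1.1, p.1.2 + 1)) = i))).card

/-- The number of vertices with spin `i`. -/
def nVtx (σ : Config K L) (i : Spin) : ℕ :=
  ((Finset.univ : Finset (Vtx K L)).filter (fun v => σ v = i)).card

end Defs

/-- The coupling constants of the generalized Potts model. -/
structure Couplings where
  J11 : ℝ
  J22 : ℝ
  J33 : ℝ
  J12 : ℝ
  J13 : ℝ
  J23 : ℝ

namespace Couplings

def γ1 (C : Couplings) : ℝ := C.J11 - C.J22
def γ12 (C : Couplings) : ℝ := C.J12 + C.J22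
def γ23 (C : Couplings) : ℝ := C.J23 + C.J22

end Couplings

/-- The Hamiltonian of the generalized three-state Potts model. -/
noncomputable def H (K L : ℕ) [NeZero K] [NeZero L] (C : Couplings) (σ : Config K L) : ℝ :=
  -(C.J11 * nEdge K L σ 0 0 + C.J22 * nEdge K L σ 1 1 + C.J33 * nEdge K L σ 2 2)
    + C.J12 * nEdge K L σ 0 1 + C.J13 * nEdge K L σ 0 2 + C.J23 * nEdge K L σ 1 2

/-- The auxiliary function `f_h`. -/
noncomputable def fh (h x : ℝ) : ℝ :=
  4 * (x + h / 2) * (⌈(x + h / 2) / h⌉ : ℝ)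
    - 2 * h * ((⌈(x + h / 2) / h⌉ : ℝ) ^ 2 - (⌈(x + h / 2) / h⌉ : ℝ) + 1)

/-- The critical length `ℓ*`. -/
noncomputable def lstar (C : Couplings) : ℕ := ⌈(2 * C.γ12 + C.γ1) / (2 * C.γ1)⌉₊

/-- The critical energy barrier `Γ*`. -/
noncomputable def Γstar (C : Couplings) : ℝ := fh C.γ1 C.γ12

/-- The standing assumptions on the lattice sizes and the coupling constants. -/
structure Admissible (K L : ℕ) (C : Couplings) : Prop where
  hKL : K ≤ L
  hK : 2 * lstar C ^ 2 ≤ K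
  pos11 : 0 < C.J11
  pos22 : 0 < C.J22
  pos33 : 0 < C.J33
  pos12 : 0 < C.J12
  pos13 : 0 < C.J13
  pos23 : 0 < C.J23
  h1122 : C.J22 < C.J11
  h2233 : C.J22 = C.J33
  h1213 : C.J12 = C.J13
  hA : ∀ n : ℤ, (2 * C.γ12 + C.γ1) / (2 * C.γ1) ≠ (n : ℝ)
  hB : fh C.γ1 C.γ12 = 2 * (K + 1) * C.γ23
  hC : 4 * C.γ23 + C.γ1 ≤ 2 * C.γ12

section Paths

variable (K L : ℕ) [NeZero K] [NeZero L]

/-- Two configurations differ at exactly one vertex. -/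
def SingleFlip (σ σ' : Config K L) : Prop :=
  ∃ v, σ v ≠ σ' v ∧ ∀ w, w ≠ v → σ w = σ' w

/-- A path: a finite sequence of configurations in which consecutive configurations differ
at exactly one vertex. -/
structure Path where
  len : ℕ
  toFun : ℕ → Config K L
  step : ∀ n, n < len → SingleFlip K L (toFun n) (toFun (n + 1))

/-- The height of a path: the maximum of `H` along it. -/
noncomputable def Path.height {K L : ℕ} [NeZero K] [NeZero L] (ω : Path K L)
    (C : Couplings) : ℝ :=
  Finset.sup' (Finset.range (ω.len + 1))
    (Finset.nonempty_range_iff.mpr (Nat.succ_ne_zero _))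
    (fun n => H K L C (ω.toFun n))

/-- The path goes from `σ` to `σ'`. -/
def Path.FromTo {K L : ℕ} [NeZero K] [NeZero L] (ω : Path K L)
    (σ σ' : Config K L) : Prop :=
  ω.toFun 0 = σ ∧ ω.toFun ω.len = σ'

/-- A path is an `ij`-path if every configuration along it has all spins in `{i, j}`. -/
def Path.OnlySpins {K L : ℕ} [NeZero K] [NeZero L] (ω : Path K L) (i j : Spin) : Prop :=
  ∀ n ≤ ω.len, ∀ v, ω.toFun n v = i ∨ ω.toFun n v = j

/-- The communication height `Φ(σ, σ')`: the minimal height over paths from `σ` to `σ'`. -/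
noncomputable def Phi (C : Couplings) (σ σ' : Config K L) : ℝ :=
  sInf {x | ∃ ω : Path K L, ω.FromTo σ σ' ∧ ω.height C = x}

/-- The communication height `Φ(σ, A)` between `σ` and a set `A`. -/
noncomputable def PhiSet (C : Couplings) (σ : Config K L) (A : Set (Config K L)) : ℝ :=
  sInf {x | ∃ ω : Path K L, ω.toFun 0 = σ ∧ ω.toFun ω.len ∈ A ∧ ω.height C = x}

/-- The energy barrier `Γ(σ, σ') = Φ(σ, σ') − H(σ)`. -/
noncomputable def Gamma (C : Couplings) (σ σ' : Config K L) : ℝ :=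
  Phi K L C σ σ' - H K L C σ

/-- The stability level `V_σ = Φ(σ, I_σ) − H(σ)` where `I_σ = {η : H(η) < H(σ)}`. -/
noncomputable def stabLevel (C : Couplings) (σ : Config K L) : ℝ :=
  PhiSet K L C σ {η | H K L C η < H K L C σ} - H K L C σ

/-- The set `X^s` of global minimizers of `H`. -/
def Xs (C : Couplings) : Set (Config K L) :=
  {σ | ∀ η, H K L C σ ≤ H K L C η}

/-- The set `X^m` of metastable configurations. -/
noncomputable def Xm (C : Couplings) : Set (Config K L) :=
  {η | η ∉ Xs K L C ∧
    stabLevel K L C η = sSup {x | ∃ σ, σ ∉ Xs K L C ∧ stabLevel K L C σ = x}}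

/-- The projection operator `P^{rs}` replacing every spin `r` by `s`. -/
def proj (r s : Spin) (σ : Config K L) : Config K L :=
  fun v => if σ v = r then s else σ v

/-- The initial cycle `C_r = {σ : Φ(𝐫, σ) < H(𝟐) + Γ*}`. -/
noncomputable def initCycle (C : Couplings) (r : Spin) : Set (Config K L) :=
  {σ | Phi K L C (const K L r) σ < H K L C (const K L 1) + Γstar C}

/-- An optimal path from `σ` to `σ'`: a path whose height equals `Φ(σ, σ')`. -/
noncomputable def OptPath (C : Couplings) (σ σ' : Config K L) (ω : Path K L) : Prop :=
  ω.FromTo σ σ' ∧ ω.height C = Phi K L C σ σ'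

/-- The configurations at which `H` attains its maximum along a path. -/
noncomputable def pathArgmax (C : Couplings) (ω : Path K L) : Set (Config K L) :=
  {ξ | (∃ n ≤ ω.len, ω.toFun n = ξ) ∧ H K L C ξ = ω.height C}

/-- The set of minimal saddles `S(σ, σ')`. -/
noncomputable def Saddles (C : Couplings) (σ σ' : Config K L) : Set (Config K L) :=
  {ξ | ∃ ω : Path K L, OptPath K L C σ σ' ω ∧ ξ ∈ pathArgmax K L C ω}

/-- `W` is a gate for the transition `σ → σ'`. -/
noncomputable def IsGate (C : Couplings) (σ σ' : Config K L) (W : Set (Config K L)) : Prop :=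
  W ⊆ Saddles K L C σ σ' ∧
    ∀ ω : Path K L, OptPath K L C σ σ' ω → ∃ n ≤ ω.len, ω.toFun n ∈ W

/-- `W` is a minimal gate for the transition `σ → σ'`. -/
noncomputable def IsMinimalGate (C : Couplings) (σ σ' : Config K L)
    (W : Set (Config K L)) : Prop :=
  IsGate K L C σ σ' W ∧
    ∀ W', W' ⊂ W → ∃ ω : Path K L, OptPath K L C σ σ' ω ∧ ∀ n ≤ ω.len, ω.toFun n ∉ W'

/-- `G(σ, σ')`: the union of all minimal gates for the transition `σ → σ'`. -/
noncomputable def gateUnion (C : Couplings) (σ σ' : Config K L) : Set (Config K L) :=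
  {ξ | ∃ W, IsMinimalGate K L C σ σ' W ∧ ξ ∈ W}

end Paths

section Geometry

variable (K L : ℕ)

/-- The `a × b` rectangle (`a` columns, `b` rows) with lower-left corner `(x0, y0)`. -/
def rectSet (x0 : ZMod K) (y0 : ZMod L) (a b : ℕ) : Set (Vtx K L) :=
  {v | ∃ i j : ℕ, i < a ∧ j < b ∧ v = (x0 + (i : ZMod K), y0 + (j : ZMod L))}

/-- A vertical bar of `l` consecutive cells in column `x` starting at row `y0`. -/
def barV (x : ZMod K) (y0 : ZMod L) (l : ℕ) : Set (Vtx K L) :=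
  {v | ∃ j : ℕ, j < l ∧ v = (x, y0 + (j : ZMod L))}

/-- A horizontal bar of `l` consecutive cells in row `y` starting at column `x0`. -/
def barH (x0 : ZMod K) (y : ZMod L) (l : ℕ) : Set (Vtx K L) :=
  {v | ∃ i : ℕ, i < l ∧ v = (x0 + (i : ZMod K), y)}

/-- The configuration with spin `s` exactly on the set `A` and spin `r` elsewhere. -/
noncomputable def onSet (A : Set (Vtx K L)) (r s : Spin) : Config K L :=
  fun v => @ite _ (v ∈ A) (Classical.dec _) s r

/-- `R_{a,b}(r,s)`: configurations equal to `r` everywhere except for spins `s` on an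
`a × b` rectangle. -/
noncomputable def Rconf (a b : ℕ) (r s : Spin) : Set (Config K L) :=
  {σ | ∃ x0 y0, σ = onSet K L (rectSet K L x0 y0 a b) r s}

/-- `B^l_{a,b}(r,s)`: configurations equal to `r` everywhere except for spins `s` on an
`a × b` rectangle together with a bar of `l` consecutive cells attached to one of the
(vertical) sides of length `b`. -/
noncomputable def Bconf (a b l : ℕ) (r s : Spin) : Set (Config K L) :=
  {σ | ∃ (x0 : ZMod K) (y0 : ZMod L) (x : ZMod K) (j0 : ℕ),
      (x = x0 - 1 ∨ x = x0 + (a : ZMod K)) ∧ j0 + l ≤ b ∧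
      σ = onSet K L (rectSet K L x0 y0 a b ∪ barV K L x (y0 + (j0 : ZMod L)) l) r s}

/-- `B̂^l_{a,b}(r,s)`: as `B^l_{a,b}(r,s)` but with the bar attached to one of the
(horizontal) sides of length `a`. -/
noncomputable def Bhat (a b l : ℕ) (r s : Spin) : Set (Config K L) :=
  {σ | ∃ (x0 : ZMod K) (y0 : ZMod L) (y : ZMod L) (i0 : ℕ),
      (y = y0 - 1 ∨ y = y0 + (b : ZMod L)) ∧ i0 + l ≤ a ∧
      σ = onSet K L (rectSet K L x0 y0 a b ∪ barH K L (x0 + (i0 : ZMod K)) y l) r s}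

/-- The critical set `W(𝐦, 𝟏) = B^1_{ℓ*−1,ℓ*}(m,1) ∪ B̂^1_{ℓ*,ℓ*−1}(m,1)`. -/
noncomputable def Wcrit (C : Couplings) (m : Spin) : Set (Config K L) :=
  Bconf K L (lstar C - 1) (lstar C) 1 m 0 ∪ Bhat K L (lstar C) (lstar C - 1) 1 m 0

/-- The set `W'(𝐦, 𝟏) = B̂^1_{ℓ*−1,ℓ*}(m,1) ∪ B^1_{ℓ*,ℓ*−1}(m,1)`. -/
noncomputable def Wcrit' (C : Couplings) (m : Spin) : Set (Config K L) :=
  Bhat K L (lstar C - 1) (lstar C) 1 m 0 ∪ Bconf K L (lstar C) (lstar C - 1) 1 m 0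

/-- The set `𝒫(𝐫, 𝐬)`. -/
noncomputable def Pgate (r s : Spin) : Set (Config K L) :=
  Bconf K L 1 K (K - 1) r s ∪ (if K = L then Bhat K L K 1 (K - 1) r s else ∅)

/-- The set `𝒬(𝐫, 𝐬)`. -/
noncomputable def Qgate (r s : Spin) : Set (Config K L) :=
  Rconf K L 2 (K - 1) r s ∪ Bconf K L 1 K (K - 2) r s ∪
    (if K = L then Rconf K L (K - 1) 2 r s ∪ Bhat K L K 1 (K - 2) r s else ∅)

/-- The set `ℋ_i(𝐫, 𝐬)`. -/
noncomputable def Hgate (i : ℕ) (r s : Spin) : Set (Config K L) :=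
  Bconf K L 1 K i r s ∪ (⋃ j ∈ Finset.Icc (i + 1) (K - 2), Bconf K L 1 (K - 1) j r s) ∪
    (if K = L then
      Bhat K L K 1 i r s ∪ ⋃ j ∈ Finset.Icc (i + 1) (K - 2), Bhat K L (K - 1) 1 j r s
    else ∅)

/-- The set `𝒲^h_j(𝐫, 𝐬)`. -/
noncomputable def Wgate (j h : ℕ) (r s : Spin) : Set (Config K L) :=
  Bconf K L j K h r s ∪ (if K = L then Bhat K L K j h r s else ∅)

/-- The admissible gate collection for the transition between `𝟐` and `𝟑`. -/
noncomputable def gateCollection : Set (Set (Config K L)) :=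
  {A | (∃ j h, 2 ≤ j ∧ j ≤ L - 3 ∧ 1 ≤ h ∧ h ≤ K - 1 ∧ A = Wgate K L j h 1 2)
    ∨ A = Qgate K L 1 2 ∨ A = Pgate K L 1 2 ∨ A = Pgate K L 2 1 ∨ A = Qgate K L 2 1
    ∨ (∃ i, 1 ≤ i ∧ i ≤ K - 3 ∧ A = Hgate K L i 1 2)
    ∨ (∃ i, 1 ≤ i ∧ i ≤ K - 3 ∧ A = Hgate K L i 2 1)}

/-- The union `𝒲(𝟐, 𝟑)` of all the plateau gates between `𝟐` and `𝟑`. -/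
noncomputable def W23 : Set (Config K L) :=
  (⋃ i ∈ Finset.Icc 1 (K - 3), Hgate K L i 1 2) ∪ Qgate K L 1 2 ∪ Pgate K L 1 2 ∪
    (⋃ j ∈ Finset.Icc 2 (L - 3), ⋃ h ∈ Finset.Icc 1 (K - 1), Wgate K L j h 1 2) ∪
    Pgate K L 2 1 ∪ Qgate K L 2 1 ∪ (⋃ i ∈ Finset.Icc 1 (K - 3), Hgate K L i 2 1)

/-- Nearest-neighbour adjacency on the torus. -/
def Adj (v w : Vtx K L) : Prop :=
  w = (v.1 + 1, v.2) ∨ w = (v.1 - 1, v.2) ∨ w = (v.1, v.2 + 1) ∨ w = (v.1, v.2 - 1)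

/-- An `r`-cluster of `σ`: a maximal connected set of vertices all having spin `r`. -/
def IsCluster (σ : Config K L) (r : Spin) (A : Set (Vtx K L)) : Prop :=
  A.Nonempty ∧ (∀ v ∈ A, σ v = r) ∧
    (∀ v ∈ A, ∀ w ∈ A,
      Relation.ReflTransGen (fun a b => a ∈ A ∧ b ∈ A ∧ Adj K L a b) v w) ∧
    (∀ v ∈ A, ∀ w, Adj K L v w → σ w = r → w ∈ A)

/-- A set of vertices is a rectangle: the product of a set of consecutive columns and a set
of consecutive rows of the torus. -/
def IsRectangle (A : Set (Vtx K L)) : Prop :=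
  ∃ (x0 : ZMod K) (y0 : ZMod L) (a b : ℕ), a ≤ K ∧ b ≤ L ∧ A = rectSet K L x0 y0 a b

end Geometry

section LocalMin

variable (K L : ℕ) [NeZero K] [NeZero L]

/-- The set `M` of strict local minima of `H`. -/
noncomputable def Mset (C : Couplings) : Set (Config K L) :=
  {σ | ∀ σ', SingleFlip K L σ σ' → H K L C σ < H K L C σ'}

/-- A stable plateau: a nonempty set of configurations of constant energy, connected under
single spin flips, such that every configuration outside it reachable by a single spin flip
has strictly larger energy. -/
noncomputable def IsStablePlateau (C : Couplings) (D : Set (Config K L)) : Prop :=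
  D.Nonempty ∧ (∃ c, ∀ σ ∈ D, H K L C σ = c) ∧
    (∀ σ ∈ D, ∀ η ∈ D,
      Relation.ReflTransGen (fun a b => a ∈ D ∧ b ∈ D ∧ SingleFlip K L a b) σ η) ∧
    (∀ σ ∈ D, ∀ σ', SingleFlip K L σ σ' → σ' ∉ D → H K L C σ < H K L C σ')

/-- The union `M̄` of all stable plateaux. -/
noncomputable def Mbar (C : Couplings) : Set (Config K L) :=
  {σ | ∃ D, IsStablePlateau K L C D ∧ σ ∈ D}

end LocalMin

set_option linter.unusedSectionVars false
set_option linter.unreachableTactic false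
set_option linter.unusedTactic false

section ProjAux

variable (K L : ℕ) [NeZero K] [NeZero L]

/-- The neighbour of `p.1` in direction `p.2`. -/
def nbrP (p : Vtx K L × Bool) : Vtx K L :=
  if p.2 then (p.1.1 + 1, p.1.2) else (p.1.1, p.1.2 + 1)

lemma nEdge_eq_sum (σ : Config K L) (i j : Spin) :
    nEdge K L σ i j = ∑ p : Vtx K L × Bool,
      (if (σ p.1 = i ∧ σ (nbrP K L p) = j) ∨ (σ p.1 = j ∧ σ (nbrP K L p) = i)
        then 1 else 0) := by
  rw [nEdge, Finset.card_filter]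
  apply Finset.sum_congr rfl
  intro p _
  simp [nbrP]
  congr

lemma proj_ne_zero (σ : Config K L) (v : Vtx K L) : proj K L 0 1 σ v ≠ 0 := by
  unfold proj
  split <;> simp_all <;> omega

lemma nEdge_proj_zero (σ : Config K L) (j : Spin) :
    nEdge K L (proj K L 0 1 σ) 0 j = 0 := by
  rw [nEdge, Finset.card_eq_zero, Finset.filter_eq_empty_iff]
  intro p _
  have h1 := proj_ne_zero K L σ p.1
  have h2 := proj_ne_zero K L σ (if p.2 then (p.1.1 + 1, p.1.2) else (p.1.1, p.1.2 + 1))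
  push_neg
  constructor
  · intro h; exact absurd h h1
  · intro _ h; exact absurd h h2

lemma proj_apply (σ : Config K L) (v : Vtx K L) :
    proj K L 0 1 σ v = if σ v = 0 then 1 else σ v := rfl

lemma spin_cases : ∀ x : Spin, x = 0 ∨ x = 1 ∨ x = 2 := by decide

lemma nEdge_proj_11 (σ : Config K L) :
    nEdge K L (proj K L 0 1 σ) 1 1
      = nEdge K L σ 1 1 + nEdge K L σ 0 0 + nEdge K L σ 0 1 := by
  simp only [nEdge_eq_sum, ← Finset.sum_add_distrib]
  apply Finset.sum_congr rfl
  intro p _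
  simp only [proj_apply]
  rcases spin_cases (σ p.1) with h | h | h <;>
    rcases spin_cases (σ (nbrP K L p)) with h' | h' | h' <;>
      simp [h, h']

lemma nEdge_proj_12 (σ : Config K L) :
    nEdge K L (proj K L 0 1 σ) 1 2 = nEdge K L σ 1 2 + nEdge K L σ 0 2 := by
  simp only [nEdge_eq_sum, ← Finset.sum_add_distrib]
  apply Finset.sum_congr rfl
  intro p _
  simp only [proj_apply]
  rcases spin_cases (σ p.1) with h | h | h <;>
    rcases spin_cases (σ (nbrP K L p)) with h' | h' | h' <;>
      simp [h, h']

lemma nEdge_proj_22 (σ : Config K L) :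
    nEdge K L (proj K L 0 1 σ) 2 2 = nEdge K L σ 2 2 := by
  simp only [nEdge_eq_sum]
  apply Finset.sum_congr rfl
  intro p _
  simp only [proj_apply]
  rcases spin_cases (σ p.1) with h | h | h <;>
    rcases spin_cases (σ (nbrP K L p)) with h' | h' | h' <;>
      simp [h, h']

/-- The shift equivalence sending an edge slot to the slot based at its endpoint. -/
def shiftE : Vtx K L × Bool ≃ Vtx K L × Bool where
  toFun p := (nbrP K L p, p.2)
  invFun p := ((if p.2 then (p.1.1 - 1, p.1.2) else (p.1.1, p.1.2 - 1)), p.2)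
  left_inv p := by
    obtain ⟨⟨x, y⟩, c⟩ := p
    cases c <;> simp [nbrP]
  right_inv p := by
    obtain ⟨⟨x, y⟩, c⟩ := p
    cases c <;> simp [nbrP]

lemma sum_nbr_eq (f : Vtx K L → ℕ) :
    ∑ p : Vtx K L × Bool, f (nbrP K L p) = ∑ p : Vtx K L × Bool, f p.1 := by
  exact Equiv.sum_comp (shiftE K L) (fun q => f q.1)

lemma nVtx_eq_sum (σ : Config K L) (i : Spin) :
    nVtx K L σ i = ∑ v : Vtx K L, (if σ v = i then 1 else 0) := by
  rw [nVtx, Finset.card_filter]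

/-- Degree identity: each spin-0 vertex has four incident edge slots. -/
lemma degree_identity (σ : Config K L) :
    2 * nEdge K L σ 0 0 + nEdge K L σ 0 1 + nEdge K L σ 0 2
      = 4 * nVtx K L σ 0 := by
  have key : 2 * nEdge K L σ 0 0 + nEdge K L σ 0 1 + nEdge K L σ 0 2
      = ∑ p : Vtx K L × Bool,
          ((if σ p.1 = 0 then 1 else 0) + (if σ (nbrP K L p) = 0 then 1 else 0)) := by
    simp only [nEdge_eq_sum, Finset.mul_sum, ← Finset.sum_add_distrib]
    apply Finset.sum_congr rfl
    intro p _
    rcases spin_cases (σ p.1) with h | h | h <;>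
      rcases spin_cases (σ (nbrP K L p)) with h' | h' | h' <;>
        simp [h, h']
  have hshift : (∑ p : Vtx K L × Bool, if σ (nbrP K L p) = 0 then 1 else 0)
      = ∑ p : Vtx K L × Bool, if σ p.1 = 0 then 1 else 0 :=
    Equiv.sum_comp (shiftE K L) (fun q => if σ q.1 = 0 then 1 else 0)
  rw [key, Finset.sum_add_distrib, hshift]
  have : ∑ p : Vtx K L × Bool, (if σ p.1 = 0 then 1 else 0)
      = 2 * nVtx K L σ 0 := by
    rw [nVtx_eq_sum, Fintype.sum_prod_type_right]
    simp [two_mul]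
  rw [this]
  ring

/-- In `ZMod n`, a proper nonempty subset has strictly fewer "successor pairs"
than elements. -/
lemma succ_pairs_lt {n : ℕ} [NeZero n] (T : Finset (ZMod n)) (hT : T.card < n) :
    (T.filter (fun x => x + 1 ∈ T)).card + (if T.Nonempty then 1 else 0) ≤ T.card := by
  by_cases hne : T.Nonempty
  · simp only [hne, if_pos]
    have hss : T.filter (fun x => x + 1 ∈ T) ⊂ T := by
      refine ⟨Finset.filter_subset _ _, ?_⟩
      intro hsub
      -- then T is closed under +1, hence T = univ
      have hclosed : ∀ x ∈ T, x + 1 ∈ T := by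
        intro x hx
        exact (Finset.mem_filter.mp (hsub hx)).2
      obtain ⟨x0, hx0⟩ := hne
      have hmem : ∀ m : ℕ, x0 + (m : ZMod n) ∈ T := by
        intro m
        induction m with
        | zero => simpa using hx0
        | succ k ih =>
            have h2 := hclosed _ ih
            have hcast : ((k + 1 : ℕ) : ZMod n) = (k : ZMod n) + 1 := by push_cast; ring
            rw [hcast, ← add_assoc]
            exact h2
      have huniv : T = Finset.univ := by
        apply Finset.eq_univ_iff_forall.mpr
        intro z
        have := hmem (z - x0).val
        rwa [ZMod.natCast_val, ZMod.cast_id, add_sub_cancel] at this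
      rw [huniv, Finset.card_univ, ZMod.card] at hT
      omega
    have := Finset.card_lt_card hss
    omega
  · rw [Finset.not_nonempty_iff_eq_empty] at hne
    simp [hne]

end ProjAux
section ProjAux2

variable (K L : ℕ) [NeZero K] [NeZero L]

open Finset

/-- Horizontal 00-edge count. -/
def hCnt (σ : Config K L) : ℕ :=
  (univ.filter (fun v : Vtx K L => σ v = 0 ∧ σ (v.1 + 1, v.2) = 0)).card

/-- Vertical 00-edge count. -/
def vCnt (σ : Config K L) : ℕ :=
  (univ.filter (fun v : Vtx K L => σ v = 0 ∧ σ (v.1, v.2 + 1) = 0)).card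

/-- Number of rows containing a spin-0 vertex. -/
noncomputable def rowCnt (σ : Config K L) : ℕ :=
  (univ.filter (fun y : ZMod L => ∃ x, σ (x, y) = 0)).card

/-- Number of columns containing a spin-0 vertex. -/
noncomputable def colCnt (σ : Config K L) : ℕ :=
  (univ.filter (fun x : ZMod K => ∃ y, σ (x, y) = 0)).card

lemma nEdge00_split (σ : Config K L) :
    nEdge K L σ 0 0 = hCnt K L σ + vCnt K L σ := by
  rw [nEdge_eq_sum, hCnt, vCnt, Finset.card_filter, Finset.card_filter]
  rw [Fintype.sum_prod_type]
  simp only [Fintype.sum_bool, nbrP, if_pos, if_neg, Bool.false_eq_true,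
    not_false_iff, and_self, or_self]
  rw [Finset.sum_add_distrib]

/-- Row counting bound for the horizontal edges. -/
lemma hCnt_bound (σ : Config K L) (hN : nVtx K L σ 0 < K) :
    hCnt K L σ + rowCnt K L σ ≤ nVtx K L σ 0 := by
  classical
  set T : ZMod L → Finset (ZMod K) :=
    fun y => univ.filter (fun x => σ (x, y) = 0) with hTdef
  have hNsum : nVtx K L σ 0 = ∑ y : ZMod L, (T y).card := by
    rw [nVtx, Finset.card_filter, Fintype.sum_prod_type_right]
    apply Finset.sum_congr rfl
    intro y _
    rw [Finset.card_filter]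
  have hH : hCnt K L σ = ∑ y : ZMod L, ((T y).filter (fun x => x + 1 ∈ T y)).card := by
    rw [hCnt, Finset.card_filter, Fintype.sum_prod_type_right]
    apply Finset.sum_congr rfl
    intro y _
    rw [Finset.card_filter, Finset.sum_filter]
    apply Finset.sum_congr rfl
    intro x _
    simp [hTdef, ite_and]
  have hR : rowCnt K L σ = ∑ y : ZMod L, (if (T y).Nonempty then 1 else 0) := by
    rw [rowCnt, Finset.card_filter]
    apply Finset.sum_congr rfl
    intro y _
    congr 1
    simp [hTdef, Finset.Nonempty]
  rw [hH, hR, hNsum, ← Finset.sum_add_distrib]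
  apply Finset.sum_le_sum
  intro y _
  apply succ_pairs_lt
  calc (T y).card ≤ ∑ y' : ZMod L, (T y').card :=
        Finset.single_le_sum (f := fun y' : ZMod L => (T y').card)
          (fun _ _ => Nat.zero_le _) (Finset.mem_univ y)
    _ = nVtx K L σ 0 := hNsum.symm
    _ < K := hN

/-- Column counting bound for the vertical edges. -/
lemma vCnt_bound (σ : Config K L) (hN : nVtx K L σ 0 < L) :
    vCnt K L σ + colCnt K L σ ≤ nVtx K L σ 0 := by
  classical
  set T : ZMod K → Finset (ZMod L) :=
    fun x => univ.filter (fun y => σ (x, y) = 0) with hTdef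
  have hNsum : nVtx K L σ 0 = ∑ x : ZMod K, (T x).card := by
    rw [nVtx, Finset.card_filter, Fintype.sum_prod_type]
    apply Finset.sum_congr rfl
    intro x _
    rw [Finset.card_filter]
  have hH : vCnt K L σ = ∑ x : ZMod K, ((T x).filter (fun y => y + 1 ∈ T x)).card := by
    rw [vCnt, Finset.card_filter, Fintype.sum_prod_type]
    apply Finset.sum_congr rfl
    intro x _
    rw [Finset.card_filter, Finset.sum_filter]
    apply Finset.sum_congr rfl
    intro y _
    simp [hTdef, ite_and]
  have hR : colCnt K L σ = ∑ x : ZMod K, (if (T x).Nonempty then 1 else 0) := by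
    rw [colCnt, Finset.card_filter]
    apply Finset.sum_congr rfl
    intro x _
    congr 1
    simp [hTdef, Finset.Nonempty]
  rw [hH, hR, hNsum, ← Finset.sum_add_distrib]
  apply Finset.sum_le_sum
  intro x _
  apply succ_pairs_lt
  calc (T x).card ≤ ∑ x' : ZMod K, (T x').card :=
        Finset.single_le_sum (f := fun x' : ZMod K => (T x').card)
          (fun _ _ => Nat.zero_le _) (Finset.mem_univ x)
    _ = nVtx K L σ 0 := hNsum.symm
    _ < L := hN

/-- The number of spin-0 vertices is at most (#columns)·(#rows) used. -/
lemma nVtx_le_mul (σ : Config K L) :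
    nVtx K L σ 0 ≤ colCnt K L σ * rowCnt K L σ := by
  classical
  rw [nVtx]
  calc (univ.filter (fun v : Vtx K L => σ v = 0)).card
      ≤ ((univ.filter (fun x : ZMod K => ∃ y, σ (x, y) = 0)) ×ˢ
         (univ.filter (fun y : ZMod L => ∃ x, σ (x, y) = 0))).card := by
        apply Finset.card_le_card
        intro v hv
        rw [Finset.mem_filter] at hv
        rw [Finset.mem_product, Finset.mem_filter, Finset.mem_filter]
        refine ⟨⟨Finset.mem_univ _, ⟨v.2, ?_⟩⟩, ⟨Finset.mem_univ _, ⟨v.1, ?_⟩⟩⟩ <;>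
          simpa using hv.2
    _ = colCnt K L σ * rowCnt K L σ := by
        rw [Finset.card_product, colCnt, rowCnt]

lemma nVtx_eq_zero_iff (σ : Config K L) :
    nVtx K L σ 0 = 0 ↔ ∀ v, σ v ≠ 0 := by
  rw [nVtx, Finset.card_eq_zero, Finset.filter_eq_empty_iff]
  simp

end ProjAux2
/-- The purely arithmetic core of the projection estimate. -/
lemma final_arith (g1 g12 g23 a b c nR r cc l : ℝ)
    (hg1 : 0 < g1) (hg23 : 0 < g23) (hl0 : 0 ≤ l)
    (hb0 : 0 ≤ b) (hc0 : 0 ≤ c) (hr0 : 0 ≤ r) (hcc0 : 0 ≤ cc)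
    (f1 : 2 * a + b + c = 4 * nR)
    (f2 : a + r + cc ≤ 2 * nR)
    (f3 : nR ≤ cc * r)
    (f4 : nR ≤ l ^ 2)
    (f5 : 1 ≤ nR)
    (f6 : g1 * l < g1 + 2 * (g12 - g23)) :
    g1 * a - g12 * b - (g12 - g23) * c < 0 := by
  set s := Real.sqrt nR with hsdef
  have hs0 : 0 ≤ s := Real.sqrt_nonneg _
  have hssq : s * s = nR := Real.mul_self_sqrt (by linarith)
  have hs1 : 1 ≤ s := by
    have h := Real.sqrt_le_sqrt f5
    rwa [Real.sqrt_one] at h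
  have hspos : (0 : ℝ) < s := lt_of_lt_of_le zero_lt_one hs1
  have hsl : s ≤ l := by
    have h := Real.sqrt_le_sqrt f4
    rwa [Real.sqrt_sq hl0] at h
  have h2s : 2 * s ≤ r + cc := by
    have e1 : Real.sqrt (cc * r) = Real.sqrt cc * Real.sqrt r := Real.sqrt_mul hcc0 r
    have e2 : Real.sqrt cc * Real.sqrt cc = cc := Real.mul_self_sqrt hcc0
    have e3 : Real.sqrt r * Real.sqrt r = r := Real.mul_self_sqrt hr0
    have h1' : s ≤ Real.sqrt (cc * r) := Real.sqrt_le_sqrt f3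
    rw [e1] at h1'
    nlinarith [sq_nonneg (Real.sqrt cc - Real.sqrt r)]
  have hpg : 0 ≤ g1 + 2 * (g12 - g23) := by linarith [mul_nonneg hg1.le hl0, f6]
  have f1g : (g12 - g23) * (2 * a + b + c) = (g12 - g23) * (4 * nR) := by rw [f1]
  have e2' := mul_le_mul_of_nonneg_left f2 hpg
  have e4' := mul_le_mul_of_nonneg_left h2s hpg
  have e5a : s * s ≤ l * s := mul_le_mul_of_nonneg_right hsl hs0
  have e5 : g1 * nR ≤ g1 * (l * s) := by
    rw [← hssq]
    exact mul_le_mul_of_nonneg_left e5a hg1.le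
  have e6 := mul_lt_mul_of_pos_right f6 hspos
  have hb23 : 0 ≤ g23 * b := mul_nonneg hg23.le hb0
  nlinarith [f1g, hb23, e2', e4', e5, e6]

theorem projection_one_to_two (K L : ℕ) [NeZero K] [NeZero L] (C : Couplings)
    (hadm : Admissible K L C)
    (σ : Config K L)
    (h1 : H K L C σ - H K L C (const K L 1) ≤ Γstar C)
    (h2 : nVtx K L σ 0 ≤ lstar C ^ 2) :
    H K L C (proj K L 0 1 σ) ≤ H K L C σ ∧
    (H K L C (proj K L 0 1 σ) = H K L C σ ↔ nVtx K L σ 0 = 0) := by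
  classical
  obtain ⟨hKL, hK, pos11, pos22, pos33, pos12, pos13, pos23, h1122, h2233, h1213,
    hA, hB, hC⟩ := hadm
  clear hA hB h1
  have hγ1 : 0 < C.γ1 := by
    show (0 : ℝ) < C.J11 - C.J22; linarith
  have hγ12 : 0 < C.γ12 := by
    show (0 : ℝ) < C.J12 + C.J22; linarith
  have hγ23 : 0 < C.γ23 := by
    show (0 : ℝ) < C.J23 + C.J22; linarith
  have hlpos : 1 ≤ lstar C := by
    rw [lstar]
    have hx : 0 < (2 * C.γ12 + C.γ1) / (2 * C.γ1) :=
      div_pos (by linarith) (by linarith)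
    exact Nat.ceil_pos.mpr hx
  have hl2 : 1 ≤ lstar C ^ 2 := Nat.one_le_pow _ _ (by omega)
  have hNK : nVtx K L σ 0 < K := by omega
  have hNL : nVtx K L σ 0 < L := lt_of_lt_of_le hNK hKL
  by_cases hN0 : nVtx K L σ 0 = 0
  · have hproj : proj K L 0 1 σ = σ := by
      funext v
      have hv := (nVtx_eq_zero_iff K L σ).mp hN0 v
      simp [proj, hv]
    rw [hproj]
    exact ⟨le_refl _, by simp [hN0]⟩
  · -- strict inequality case
    have hdiff : H K L C (proj K L 0 1 σ) - H K L C σ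
        = C.γ1 * (nEdge K L σ 0 0 : ℝ) - C.γ12 * (nEdge K L σ 0 1 : ℝ)
          - (C.γ12 - C.γ23) * (nEdge K L σ 0 2 : ℝ) := by
      simp only [H, nEdge_proj_zero, nEdge_proj_11, nEdge_proj_12, nEdge_proj_22,
        Couplings.γ1, Couplings.γ12, Couplings.γ23]
      push_cast
      linear_combination (nEdge K L σ 0 2 : ℝ) * h1213
    have f1 : 2 * (nEdge K L σ 0 0 : ℝ) + (nEdge K L σ 0 1 : ℝ) + (nEdge K L σ 0 2 : ℝ)
        = 4 * (nVtx K L σ 0 : ℝ) := by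
      exact_mod_cast congrArg (Nat.cast (R := ℝ)) (degree_identity K L σ)
    have f2 : (nEdge K L σ 0 0 : ℝ) + (rowCnt K L σ : ℝ) + (colCnt K L σ : ℝ)
        ≤ 2 * (nVtx K L σ 0 : ℝ) := by
      have ha := hCnt_bound K L σ hNK
      have hb := vCnt_bound K L σ hNL
      have hc := nEdge00_split K L σ
      have : nEdge K L σ 0 0 + rowCnt K L σ + colCnt K L σ ≤ 2 * nVtx K L σ 0 := by omega
      exact_mod_cast this
    have f3 : (nVtx K L σ 0 : ℝ) ≤ (colCnt K L σ : ℝ) * (rowCnt K L σ : ℝ) := by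
      exact_mod_cast nVtx_le_mul K L σ
    have f4 : (nVtx K L σ 0 : ℝ) ≤ (lstar C : ℝ) ^ 2 := by exact_mod_cast h2
    have f5 : (1 : ℝ) ≤ (nVtx K L σ 0 : ℝ) := by
      exact_mod_cast Nat.one_le_iff_ne_zero.mpr hN0
    have f6 : C.γ1 * (lstar C : ℝ) < C.γ1 + 2 * (C.γ12 - C.γ23) := by
      have hceil : (lstar C : ℝ) < (2 * C.γ12 + C.γ1) / (2 * C.γ1) + 1 := by
        rw [lstar]
        exact Nat.ceil_lt_add_one (le_of_lt (div_pos (by linarith) (by linarith)))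
      have heq : C.γ1 * ((2 * C.γ12 + C.γ1) / (2 * C.γ1) + 1)
          = C.γ12 + C.γ1 / 2 + C.γ1 := by
        field_simp
      have := mul_lt_mul_of_pos_left hceil hγ1
      rw [heq] at this
      linarith
    have hfinal := final_arith C.γ1 C.γ12 C.γ23
      (nEdge K L σ 0 0 : ℝ) (nEdge K L σ 0 1 : ℝ) (nEdge K L σ 0 2 : ℝ)
      (nVtx K L σ 0 : ℝ) (rowCnt K L σ : ℝ) (colCnt K L σ : ℝ) (lstar C : ℝ)
      hγ1 hγ23 (by positivity) (by positivity) (by positivity) (by positivity)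
      (by positivity) f1 f2 f3 f4 f5 f6
    have hlt : H K L C (proj K L 0 1 σ) < H K L C σ := by linarith [hdiff, hfinal]
    exact ⟨hlt.le, ⟨fun h => absurd h (ne_of_lt hlt), fun h => absurd h hN0⟩⟩

end GenPotts
end

section
/- The communication height between the two metastable states is bounded below by Γ*: Γ(𝟐,𝟑) ≥ Γ*. -/
namespace GenPotts

set_option linter.unusedSectionVars false
namespace LB

open Finset

/-- The equivalence between `Fin n` and `ZMod n`. -/
def finEquivZMod (n : ℕ) [NeZero n] : Fin n ≃ ZMod n where
  toFun j := (j : ℕ)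
  invFun z := ⟨z.val, ZMod.val_lt z⟩
  left_inv j := by ext; simp [ZMod.val_cast_of_lt j.isLt]
  right_inv z := ZMod.natCast_rightInverse z

/-- shift-reindexing of a sum over `ZMod n` -/
lemma zmod_sum_shift (n : ℕ) [NeZero n] (F : ZMod n → ℕ) (y0 : ZMod n) :
    ∑ y : ZMod n, F y = ∑ j ∈ Finset.range n, F (y0 + (j : ZMod n)) := by
  have h2 := Equiv.sum_comp ((finEquivZMod n).trans (Equiv.addLeft y0)) F
  rw [← h2, ← Fin.sum_univ_eq_sum_range (fun j => F (y0 + (j : ZMod n)))]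
  apply Finset.sum_congr rfl
  intro j _
  simp [finEquivZMod, Equiv.addLeft, add_comm]

/-- arc bound: a "metric" weight between endpoints is at most the sum along an arc. -/
lemma arc_bound (n : ℕ) [NeZero n] (w : Spin → Spin → ℕ)
    (hrefl : ∀ i, w i i = 0) (htri : ∀ i j k, w i k ≤ w i j + w j k)
    (f : ZMod n → Spin) (y : ZMod n) (k : ℕ) :
    w (f y) (f (y + (k : ZMod n))) ≤ ∑ j ∈ Finset.range k, w (f (y + (j : ZMod n))) (f (y + (j : ZMod n) + 1)) := by
  induction k with
  | zero => simp [hrefl]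
  | succ k ih =>
    rw [Finset.sum_range_succ]
    calc w (f y) (f (y + ((k+1 : ℕ) : ZMod n)))
        ≤ w (f y) (f (y + (k : ZMod n))) + w (f (y + (k : ZMod n))) (f (y + ((k+1:ℕ) : ZMod n))) :=
          htri _ _ _
      _ ≤ _ := by
          have : (((k+1:ℕ)) : ZMod n) = (k : ZMod n) + 1 := by push_cast; ring
          rw [this, ← add_assoc]
          exact Nat.add_le_add_right ih _

/-- Cyclic crossing bound: going around a cycle one pays at least twice the distance
between the values at any two sites. -/
lemma cyclic_bound (n : ℕ) [NeZero n] (w : Spin → Spin → ℕ)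
    (hrefl : ∀ i, w i i = 0) (hsymm : ∀ i j, w i j = w j i)
    (htri : ∀ i j k, w i k ≤ w i j + w j k)
    (f : ZMod n → Spin) (y1 y2 : ZMod n) :
    2 * w (f y1) (f y2) ≤ ∑ y : ZMod n, w (f y) (f (y + 1)) := by
  set k : ℕ := (y2 - y1).val with hk
  have hkn : k ≤ n := le_of_lt (ZMod.val_lt _)
  have h1 : y1 + (k : ZMod n) = y2 := by
    rw [hk, ZMod.natCast_rightInverse (y2 - y1)]; ring
  rw [zmod_sum_shift n _ y1]
  rw [Finset.range_eq_Ico, ← Finset.sum_Ico_consecutive _ (Nat.zero_le k) hkn, ← Finset.range_eq_Ico,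
    Finset.sum_Ico_eq_sum_range]
  have harc1 : w (f y1) (f y2) ≤ ∑ j ∈ Finset.range k, w (f (y1 + (j : ZMod n))) (f (y1 + (j : ZMod n) + 1)) := by
    have := arc_bound n w hrefl htri f y1 k
    rwa [h1] at this
  have harc2 : w (f y2) (f y1) ≤ ∑ j ∈ Finset.range (n - k), w (f (y1 + ((k + j : ℕ) : ZMod n))) (f (y1 + ((k + j : ℕ) : ZMod n) + 1)) := by
    have h2 : ∀ j : ℕ, y1 + ((k + j : ℕ) : ZMod n) = y2 + (j : ZMod n) := by
      intro j; push_cast; rw [← h1]; ring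
    have h3 : y2 + ((n - k : ℕ) : ZMod n) = y1 := by
      have : ((n - k : ℕ) : ZMod n) = (n : ZMod n) - (k : ZMod n) := by
        have := Nat.cast_sub hkn (R := ZMod n); exact this
      rw [this, ZMod.natCast_self, ← h1]; ring
    have := arc_bound n w hrefl htri f y2 (n - k)
    rw [h3] at this
    calc w (f y2) (f y1) ≤ ∑ j ∈ Finset.range (n - k), w (f (y2 + (j : ZMod n))) (f (y2 + (j : ZMod n) + 1)) := this
      _ = _ := by
          apply Finset.sum_congr rfl; intro j _; rw [h2 j]
  have := Nat.add_le_add harc1 harc2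
  rw [hsymm (f y2) (f y1)] at this
  omega


section SlotSums

open Finset

variable (K L : ℕ) [NeZero K] [NeZero L]

/-- The second endpoint of the edge-slot `p`. -/
def nbr (p : Vtx K L × Bool) : Vtx K L :=
  if p.2 then (p.1.1 + 1, p.1.2) else (p.1.1, p.1.2 + 1)

/-- Total weight of all edges of the torus. -/
def slotSum (w : Spin → Spin → ℕ) (σ : Config K L) : ℕ :=
  ∑ p : Vtx K L × Bool, w (σ p.1) (σ (nbr K L p))

/-- Total weight of the vertical edges in column `x`. -/
def colSum (w : Spin → Spin → ℕ) (σ : Config K L) (x : ZMod K) : ℕ :=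
  ∑ y : ZMod L, w (σ (x, y)) (σ (x, y + 1))

/-- Total weight of the horizontal edges in row `y`. -/
def rowSum (w : Spin → Spin → ℕ) (σ : Config K L) (y : ZMod L) : ℕ :=
  ∑ x : ZMod K, w (σ (x, y)) (σ (x + 1, y))

lemma slotSum_eq (w : Spin → Spin → ℕ) (σ : Config K L) :
    slotSum K L w σ = (∑ x : ZMod K, colSum K L w σ x) + ∑ y : ZMod L, rowSum K L w σ y := by
  unfold slotSum colSum rowSum
  rw [Fintype.sum_prod_type]
  have : ∀ v : Vtx K L, ∑ b : Bool, w (σ v) (σ (nbr K L (v, b)))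
      = w (σ (v.1, v.2)) (σ (v.1 + 1, v.2)) + w (σ (v.1, v.2)) (σ (v.1, v.2 + 1)) := by
    intro v
    rw [Fintype.sum_bool]
    simp [nbr]
  rw [Finset.sum_congr rfl (fun v _ => this v), Finset.sum_add_distrib]
  rw [Fintype.sum_prod_type, Fintype.sum_prod_type]
  rw [add_comm]
  congr 1
  exact Finset.sum_comm

lemma colSum_ge (w : Spin → Spin → ℕ)
    (hrefl : ∀ i, w i i = 0) (hsymm : ∀ i j, w i j = w j i)
    (htri : ∀ i j k, w i k ≤ w i j + w j k)
    (σ : Config K L) (x : ZMod K) (y1 y2 : ZMod L) :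
    2 * w (σ (x, y1)) (σ (x, y2)) ≤ colSum K L w σ x :=
  cyclic_bound L w hrefl hsymm htri (fun y => σ (x, y)) y1 y2

lemma rowSum_ge (w : Spin → Spin → ℕ)
    (hrefl : ∀ i, w i i = 0) (hsymm : ∀ i j, w i j = w j i)
    (htri : ∀ i j k, w i k ≤ w i j + w j k)
    (σ : Config K L) (y : ZMod L) (x1 x2 : ZMod K) :
    2 * w (σ (x1, y)) (σ (x2, y)) ≤ rowSum K L w σ y :=
  cyclic_bound K w hrefl hsymm htri (fun x => σ (x, y)) x1 x2

end SlotSums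

section Weights

/-- Weight used for the interface functional `M`. -/
def wM : Spin → Spin → ℕ := fun i j => if i = j then 0 else if i = 0 ∨ j = 0 then 2 else 1

/-- Weight counting the boundary edges of the spin-`0` region. -/
def wP : Spin → Spin → ℕ := fun i j => if i = j then 0 else if i = 0 ∨ j = 0 then 1 else 0

/-- Weight counting the edges between spins `1` and `2`. -/
def w12 : Spin → Spin → ℕ := fun i j => if i = j then 0 else if i = 0 ∨ j = 0 then 0 else 1

/-- Weight counting the number of `0`-endpoints of an edge. -/
def z0 : Spin → Spin → ℕ := fun i j => (if i = 0 then 1 else 0) + (if j = 0 then 1 else 0)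

lemma wM_refl : ∀ i, wM i i = 0 := by decide
lemma wM_symm : ∀ i j, wM i j = wM j i := by decide
lemma wM_tri : ∀ i j k, wM i k ≤ wM i j + wM j k := by decide
lemma wP_refl : ∀ i, wP i i = 0 := by decide
lemma wP_symm : ∀ i j, wP i j = wP j i := by decide
lemma wP_tri : ∀ i j k, wP i k ≤ wP i j + wP j k := by decide
lemma wM_eq : ∀ i j, wM i j = w12 i j + 2 * wP i j := by decide
lemma wM_pos : ∀ i j, i ≠ j → 1 ≤ wM i j := by decide
lemma wM_zero : ∀ i j, i = 0 → j ≠ 0 → wM i j = 2 := by decide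
lemma wP_zero : ∀ i j, i = 0 → j ≠ 0 → wP i j = 1 := by decide

end Weights

section Energy

open Finset

variable (K L : ℕ) [NeZero K] [NeZero L]

/-- The interaction energy of an edge as a function of its endpoint spins. -/
noncomputable def wJ (C : Couplings) : Spin → Spin → ℝ := fun i j =>
  if i = j then (if i = 0 then -C.J11 else if i = 1 then -C.J22 else -C.J33)
  else if i = 0 ∨ j = 0 then (if i = 1 ∨ j = 1 then C.J12 else C.J13) else C.J23

lemma nEdge_cast (σ : Config K L) (i j : Spin) :
    (nEdge K L σ i j : ℝ) = ∑ p : Vtx K L × Bool,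
      (if (σ p.1 = i ∧ σ (nbr K L p) = j) ∨ (σ p.1 = j ∧ σ (nbr K L p) = i) then (1:ℝ) else 0) := by
  rw [nEdge, Finset.card_filter]
  push_cast
  rfl

lemma H_eq_slot (C : Couplings) (σ : Config K L) :
    H K L C σ = ∑ p : Vtx K L × Bool, wJ C (σ p.1) (σ (nbr K L p)) := by
  have key : ∀ i j : Spin, wJ C i j =
      -(C.J11 * (if (i = 0 ∧ j = 0) ∨ (i = 0 ∧ j = 0) then (1:ℝ) else 0)
        + C.J22 * (if (i = 1 ∧ j = 1) ∨ (i = 1 ∧ j = 1) then (1:ℝ) else 0)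
        + C.J33 * (if (i = 2 ∧ j = 2) ∨ (i = 2 ∧ j = 2) then (1:ℝ) else 0))
      + C.J12 * (if (i = 0 ∧ j = 1) ∨ (i = 1 ∧ j = 0) then (1:ℝ) else 0)
      + C.J13 * (if (i = 0 ∧ j = 2) ∨ (i = 2 ∧ j = 0) then (1:ℝ) else 0)
      + C.J23 * (if (i = 1 ∧ j = 2) ∨ (i = 2 ∧ j = 1) then (1:ℝ) else 0) := by
    intro i j
    fin_cases i <;> fin_cases j <;> simp [wJ] <;> norm_num
  rw [Finset.sum_congr rfl (fun p _ => key (σ p.1) (σ (nbr K L p)))]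
  simp only [Finset.sum_add_distrib, Finset.sum_neg_distrib, ← Finset.mul_sum]
  rw [H]
  rw [nEdge_cast, nEdge_cast, nEdge_cast, nEdge_cast, nEdge_cast, nEdge_cast]

lemma H_const1 (C : Couplings) :
    H K L C (const K L 1) = ∑ p : Vtx K L × Bool, wJ C 1 1 := by
  rw [H_eq_slot]
  apply Finset.sum_congr rfl
  intro p _
  rfl

lemma z0_slot (σ : Config K L) : slotSum K L z0 σ = 4 * nVtx K L σ 0 := by
  have ha : nVtx K L σ 0 = ∑ v : Vtx K L, (if σ v = 0 then 1 else 0) := by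
    rw [nVtx, Finset.card_filter]
  unfold slotSum z0
  rw [Finset.sum_add_distrib]
  have h1 : ∑ p : Vtx K L × Bool, (if σ p.1 = 0 then 1 else 0) = 2 * nVtx K L σ 0 := by
    rw [Fintype.sum_prod_type, ha, Finset.mul_sum]
    apply Finset.sum_congr rfl
    intro v _
    rw [Fintype.sum_bool]
    by_cases h : σ v = 0 <;> simp [h, two_mul]
  have h2 : ∑ p : Vtx K L × Bool, (if σ (nbr K L p) = 0 then 1 else 0) = 2 * nVtx K L σ 0 := by
    rw [Fintype.sum_prod_type]
    have : ∀ v : Vtx K L, ∑ b : Bool, (if σ (nbr K L (v, b)) = 0 then 1 else 0)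
        = (if σ (v.1 + 1, v.2) = 0 then 1 else 0) + (if σ (v.1, v.2 + 1) = 0 then 1 else 0) := by
      intro v; rw [Fintype.sum_bool]; simp [nbr]
    rw [Finset.sum_congr rfl (fun v _ => this v), Finset.sum_add_distrib]
    have e1 : ∑ v : Vtx K L, (if σ (v.1 + 1, v.2) = 0 then 1 else 0) = nVtx K L σ 0 := by
      rw [ha]
      have := Equiv.sum_comp ((Equiv.addRight (1 : ZMod K)).prodCongr (Equiv.refl (ZMod L)))
        (fun v : Vtx K L => if σ v = 0 then (1:ℕ) else 0)
      rw [← this]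
      rfl
    have e2 : ∑ v : Vtx K L, (if σ (v.1, v.2 + 1) = 0 then 1 else 0) = nVtx K L σ 0 := by
      rw [ha]
      have := Equiv.sum_comp ((Equiv.refl (ZMod K)).prodCongr (Equiv.addRight (1 : ZMod L)))
        (fun v : Vtx K L => if σ v = 0 then (1:ℕ) else 0)
      rw [← this]
      rfl
    rw [e1, e2]
    ring
  rw [h1, h2]
  ring

lemma u_decomp (C : Couplings) (h2233 : C.J22 = C.J33) (h1213 : C.J12 = C.J13) :
    ∀ i j : Spin, wJ C i j - wJ C 1 1
      = (C.γ12 + C.γ1 / 2) * (wP i j : ℝ) - (C.γ1 / 2) * (z0 i j : ℝ) + C.γ23 * (w12 i j : ℝ) := by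
  intro i j
  fin_cases i <;> fin_cases j <;>
    simp [wJ, wP, z0, w12, Couplings.γ1, Couplings.γ12, Couplings.γ23] <;> (try ring_nf) <;>
    simp [h2233, h1213] <;> ring

/-- The fundamental identity for the energy gap. -/
lemma gap_formula (C : Couplings) (h2233 : C.J22 = C.J33) (h1213 : C.J12 = C.J13) (σ : Config K L) :
    H K L C σ - H K L C (const K L 1)
      = (C.γ12 + C.γ1 / 2) * (slotSum K L wP σ : ℝ) - 2 * C.γ1 * (nVtx K L σ 0 : ℝ)
        + C.γ23 * (slotSum K L w12 σ : ℝ) := by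
  rw [H_eq_slot, H_const1, ← Finset.sum_sub_distrib]
  rw [Finset.sum_congr rfl (fun p _ => u_decomp C h2233 h1213 (σ p.1) (σ (nbr K L p)))]
  simp only [Finset.sum_add_distrib, Finset.sum_sub_distrib, ← Finset.mul_sum]
  have hz : ((slotSum K L z0 σ : ℕ) : ℝ) = 4 * (nVtx K L σ 0 : ℝ) := by
    rw [z0_slot]; push_cast; ring
  have hcast : ∀ w : Spin → Spin → ℕ, ((slotSum K L w σ : ℕ) : ℝ)
      = ∑ p : Vtx K L × Bool, (w (σ p.1) (σ (nbr K L p)) : ℝ) := by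
    intro w; rw [slotSum]; push_cast; rfl
  rw [← hcast, ← hcast, ← hcast, hz]
  ring

end Energy

section Counting

open Finset

variable (K L : ℕ) [NeZero K] [NeZero L]

/-- Columns containing a spin-`0` vertex. -/
def Cset (σ : Config K L) : Finset (ZMod K) := Finset.univ.filter fun x => ∃ y, σ (x, y) = 0
/-- Rows containing a spin-`0` vertex. -/
def Rset (σ : Config K L) : Finset (ZMod L) := Finset.univ.filter fun y => ∃ x, σ (x, y) = 0

lemma a_le_cr (σ : Config K L) :
    nVtx K L σ 0 ≤ (Cset K L σ).card * (Rset K L σ).card := by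
  rw [nVtx, ← Finset.card_product]
  apply Finset.card_le_card
  intro v hv
  rw [Finset.mem_filter] at hv
  rw [Finset.mem_product]
  constructor
  · rw [Cset, Finset.mem_filter]
    exact ⟨Finset.mem_univ _, ⟨v.2, by rw [Prod.mk.eta]; exact hv.2⟩⟩
  · rw [Rset, Finset.mem_filter]
    exact ⟨Finset.mem_univ _, ⟨v.1, by rw [Prod.mk.eta]; exact hv.2⟩⟩

lemma colAllZero_le (σ : Config K L) (x : ZMod K) (h : ∀ y, σ (x, y) = 0) :
    L ≤ nVtx K L σ 0 := by
  rw [nVtx]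
  calc L = Fintype.card (ZMod L) := (ZMod.card L).symm
    _ = (Finset.univ : Finset (ZMod L)).card := rfl
    _ ≤ _ := by
        apply Finset.card_le_card_of_injOn (fun y => (x, y))
        · intro y _
          rw [Finset.mem_coe, Finset.mem_filter]
          exact ⟨Finset.mem_univ _, h y⟩
        · intro a _ b _ hab
          exact (Prod.mk.injEq x a x b).mp hab |>.2

lemma rowAllZero_le (σ : Config K L) (y : ZMod L) (h : ∀ x, σ (x, y) = 0) :
    K ≤ nVtx K L σ 0 := by
  rw [nVtx]
  calc K = Fintype.card (ZMod K) := (ZMod.card K).symm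
    _ = (Finset.univ : Finset (ZMod K)).card := rfl
    _ ≤ _ := by
        apply Finset.card_le_card_of_injOn (fun x => (x, y))
        · intro x _
          rw [Finset.mem_coe, Finset.mem_filter]
          exact ⟨Finset.mem_univ _, h x⟩
        · intro a _ b _ hab
          exact (Prod.mk.injEq a y b y).mp hab |>.1

/-- The perimeter of the spin-`0` region is at least twice the number of lines meeting it. -/
lemma P_ge (σ : Config K L) (haK : nVtx K L σ 0 < K) (haL : nVtx K L σ 0 < L) :
    2 * ((Cset K L σ).card + (Rset K L σ).card) ≤ slotSum K L wP σ := by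
  rw [slotSum_eq]
  have hc : 2 * (Cset K L σ).card ≤ ∑ x : ZMod K, colSum K L wP σ x := by
    calc 2 * (Cset K L σ).card = ∑ _x ∈ Cset K L σ, 2 := by rw [Finset.sum_const]; ring
      _ ≤ ∑ x ∈ Cset K L σ, colSum K L wP σ x := by
          apply Finset.sum_le_sum
          intro x hx
          rw [Cset, Finset.mem_filter] at hx
          obtain ⟨y1, hy1⟩ := hx.2
          have : ∃ y2, σ (x, y2) ≠ 0 := by
            by_contra hno
            push_neg at hno
            exact absurd (colAllZero_le K L σ x hno) (by omega)
          obtain ⟨y2, hy2⟩ := this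
          have := colSum_ge K L wP wP_refl wP_symm wP_tri σ x y1 y2
          rwa [hy1, wP_zero 0 (σ (x, y2)) rfl hy2] at this
      _ ≤ _ := Finset.sum_le_sum_of_subset (Finset.subset_univ _)
  have hr : 2 * (Rset K L σ).card ≤ ∑ y : ZMod L, rowSum K L wP σ y := by
    calc 2 * (Rset K L σ).card = ∑ _y ∈ Rset K L σ, 2 := by rw [Finset.sum_const]; ring
      _ ≤ ∑ y ∈ Rset K L σ, rowSum K L wP σ y := by
          apply Finset.sum_le_sum
          intro y hy
          rw [Rset, Finset.mem_filter] at hy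
          obtain ⟨x1, hx1⟩ := hy.2
          have : ∃ x2, σ (x2, y) ≠ 0 := by
            by_contra hno
            push_neg at hno
            exact absurd (rowAllZero_le K L σ y hno) (by omega)
          obtain ⟨x2, hx2⟩ := this
          have := rowSum_ge K L wP wP_refl wP_symm wP_tri σ y x1 x2
          rwa [hx1, wP_zero 0 (σ (x2, y)) rfl hx2] at this
      _ ≤ _ := Finset.sum_le_sum_of_subset (Finset.subset_univ _)
  omega

lemma nVtx_flip_le (σ σ' : Config K L) (h : SingleFlip K L σ σ') :
    nVtx K L σ' 0 ≤ nVtx K L σ 0 + 1 := by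
  obtain ⟨v, -, hw⟩ := h
  rw [nVtx, nVtx]
  have hsub : Finset.univ.filter (fun w => σ' w = 0)
      ⊆ insert v (Finset.univ.filter (fun w => σ w = 0)) := by
    intro w hwmem
    rw [Finset.mem_filter] at hwmem
    by_cases hv : w = v
    · exact Finset.mem_insert.mpr (Or.inl hv)
    · refine Finset.mem_insert.mpr (Or.inr ?_)
      rw [Finset.mem_filter]
      exact ⟨Finset.mem_univ _, by rw [hw w hv]; exact hwmem.2⟩
  calc _ ≤ (insert v (Finset.univ.filter (fun w => σ w = 0))).card := Finset.card_le_card hsub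
    _ ≤ _ := Finset.card_insert_le _ _

end Counting

section NatLemmas

/-- Discrete intermediate value theorem going up. -/
lemma nat_ivt (f : ℕ → ℕ) (N c : ℕ) (hstep : ∀ n < N, f (n + 1) ≤ f n + 1)
    (h0 : f 0 = 0) (hN : c ≤ f N) : ∃ n ≤ N, f n = c := by
  induction N with
  | zero => exact ⟨0, le_refl _, by omega⟩
  | succ N ih =>
    by_cases hc : c ≤ f N
    · obtain ⟨n, hn, hfn⟩ := ih (fun n hn => hstep n (by omega)) hc
      exact ⟨n, by omega, hfn⟩
    · have := hstep N (by omega)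
      exact ⟨N + 1, le_refl _, by omega⟩

lemma key_nat_aux (l c r : ℕ) (hl : 2 ≤ l) (hcr : c ≤ r) (hN : c * r ≤ l * (l - 1)) :
    (2 * l - 1) * (c * r) ≤ l * (l - 1) * (c + r) := by
  have hc : c ≤ l - 1 := by
    by_contra hlt
    push_neg at hlt
    have h1 : l ≤ c := by omega
    have : l * l ≤ c * r := Nat.mul_le_mul h1 (le_trans h1 hcr)
    have : l * l ≤ l * (l - 1) := le_trans this hN
    have := Nat.le_of_mul_le_mul_left this (by omega : 0 < l)
    omega
  have hkey : (2 * l - 1) * c ≤ c * c + l * (l - 1) := by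
    have hc' : (c : ℤ) ≤ (l : ℤ) - 1 := by
      have : (c : ℤ) ≤ ((l - 1 : ℕ) : ℤ) := by exact_mod_cast hc
      omega
    have hl' : (2 : ℤ) ≤ (l : ℤ) := by exact_mod_cast hl
    zify [show 1 ≤ 2 * l by omega, show 1 ≤ l by omega]
    nlinarith [mul_nonneg (by omega : (0:ℤ) ≤ (l : ℤ) - 1 - c) (by omega : (0:ℤ) ≤ (l : ℤ) - c)]
  calc (2 * l - 1) * (c * r) = ((2 * l - 1) * c) * r := by ring
    _ ≤ (c * c + l * (l - 1)) * r := Nat.mul_le_mul_right r hkey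
    _ = c * (c * r) + l * (l - 1) * r := by ring
    _ ≤ c * (l * (l - 1)) + l * (l - 1) * r := by
        have := Nat.mul_le_mul_left c hN
        omega
    _ = l * (l - 1) * (c + r) := by ring

lemma key_nat2 (l c r : ℕ) (hl : 2 ≤ l) (hcr : l * (l - 1) + 1 ≤ c * r) : 2 * l ≤ c + r := by
  by_contra hs
  push_neg at hs
  have h1 : (c : ℤ) + r + 1 ≤ 2 * l := by exact_mod_cast (by omega : c + r + 1 ≤ 2 * l)
  have h2 : (l : ℤ) * ((l : ℤ) - 1) + 1 ≤ (c : ℤ) * r := by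
    have := hcr
    zify [show 1 ≤ l by omega] at this
    linarith
  have hc0 : (0 : ℤ) ≤ (c : ℤ) := Int.natCast_nonneg c
  have hr0 : (0 : ℤ) ≤ (r : ℤ) := Int.natCast_nonneg r
  nlinarith [two_mul_le_add_sq (c : ℤ) (r : ℤ), sq_nonneg ((c : ℤ) + r),
    mul_le_mul_of_nonneg_left h1 (by omega : (0:ℤ) ≤ (c:ℤ) + r + 1)]

lemma key_nat_sym (l c r : ℕ) (hl : 2 ≤ l) (hN : c * r ≤ l * (l - 1)) :
    (2 * l - 1) * (c * r) ≤ l * (l - 1) * (c + r) := by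
  rcases le_total c r with hcr | hcr
  · exact key_nat_aux l c r hl hcr hN
  · calc (2 * l - 1) * (c * r) = (2 * l - 1) * (r * c) := by ring
      _ ≤ l * (l - 1) * (r + c) := key_nat_aux l r c hl hcr (by rwa [mul_comm])
      _ = l * (l - 1) * (c + r) := by ring

lemma key_nat (l c r : ℕ) (hl : 2 ≤ l) :
    min (c * r) (l * (l - 1)) * (2 * l - 1) ≤ l * (l - 1) * (c + r) := by
  by_cases h : c * r ≤ l * (l - 1)
  · rw [min_eq_left h, mul_comm]
    exact key_nat_sym l c r hl h
  · push_neg at h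
    rw [min_eq_right (le_of_lt h), mul_comm, mul_comm (2 * l - 1) (l * (l - 1))]
    have h2 := key_nat2 l c r hl (by omega)
    exact Nat.mul_le_mul_left (l * (l - 1)) (show 2 * l - 1 ≤ c + r by omega)

end NatLemmas

section Classify

open Finset

variable (K L : ℕ) [NeZero K] [NeZero L]

lemma spin_not1_not2 : ∀ c : Spin, c ≠ 1 → c ≠ 2 → c = 0 := by decide
lemma spin_cases : ∀ c : Spin, c = 0 ∨ c = 1 ∨ c = 2 := by decide

lemma col_mixed_ge (σ : Config K L) (x : ZMod K) {y1 y2 : ZMod L}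
    (h : σ (x, y1) ≠ σ (x, y2)) : 2 ≤ colSum K L wM σ x := by
  have h1 := colSum_ge K L wM wM_refl wM_symm wM_tri σ x y1 y2
  have h2 := wM_pos _ _ h
  omega

lemma col_zero_ge (σ : Config K L) (x : ZMod K) {y1 y2 : ZMod L}
    (h1 : σ (x, y1) = 0) (h2 : σ (x, y2) ≠ 0) : 4 ≤ colSum K L wM σ x := by
  have ha := colSum_ge K L wM wM_refl wM_symm wM_tri σ x y1 y2
  have hb := wM_zero (σ (x, y1)) (σ (x, y2)) h1 h2
  omega

lemma row_mixed_ge (σ : Config K L) (y : ZMod L) {x1 x2 : ZMod K}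
    (h : σ (x1, y) ≠ σ (x2, y)) : 2 ≤ rowSum K L wM σ y := by
  have h1 := rowSum_ge K L wM wM_refl wM_symm wM_tri σ y x1 x2
  have h2 := wM_pos _ _ h
  omega

lemma row_zero_ge (σ : Config K L) (y : ZMod L) {x1 x2 : ZMod K}
    (h1 : σ (x1, y) = 0) (h2 : σ (x2, y) ≠ 0) : 4 ≤ rowSum K L wM σ y := by
  have ha := rowSum_ge K L wM wM_refl wM_symm wM_tri σ y x1 x2
  have hb := wM_zero (σ (x1, y)) (σ (x2, y)) h1 h2
  omega

lemma sum_ge_all {β : Type*} [Fintype β] (f : β → ℕ) (h : ∀ b, 2 ≤ f b) :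
    2 * Fintype.card β ≤ ∑ b, f b := by
  calc 2 * Fintype.card β = ∑ _b : β, 2 := by rw [Finset.sum_const, Finset.card_univ]; ring
    _ ≤ ∑ b, f b := Finset.sum_le_sum (fun b _ => h b)

lemma sum_ge_all_plus {β : Type*} [Fintype β] [DecidableEq β] (f : β → ℕ) (b1 : β)
    (h : ∀ b, 2 ≤ f b) (h1 : 4 ≤ f b1) : 2 * Fintype.card β + 2 ≤ ∑ b, f b := by
  rw [Finset.sum_eq_sum_sdiff_singleton_add (Finset.mem_univ b1)]
  have hcard : (Finset.univ \ {b1}).card = Fintype.card β - 1 := by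
    rw [Finset.card_univ_diff, Finset.card_singleton]
  have hsum : 2 * (Fintype.card β - 1) ≤ ∑ b ∈ Finset.univ \ {b1}, f b := by
    calc 2 * (Fintype.card β - 1) = ∑ _b ∈ Finset.univ \ {b1}, 2 := by
          rw [Finset.sum_const, hcard]; ring
      _ ≤ _ := Finset.sum_le_sum (fun b _ => h b)
  have hpos : 1 ≤ Fintype.card β := Fintype.card_pos_iff.mpr ⟨b1⟩
  omega

lemma sum_ge_off_one {β : Type*} [Fintype β] [DecidableEq β] (f : β → ℕ) (b0 : β)
    (h : ∀ b, b ≠ b0 → 2 ≤ f b) : 2 * (Fintype.card β - 1) ≤ ∑ b, f b := by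
  have hsub : ∑ b ∈ Finset.univ \ {b0}, f b ≤ ∑ b, f b :=
    Finset.sum_le_sum_of_subset (Finset.subset_univ _)
  have hcard : (Finset.univ \ {b0}).card = Fintype.card β - 1 := by
    rw [Finset.card_univ_diff, Finset.card_singleton]
  have : 2 * (Fintype.card β - 1) ≤ ∑ b ∈ Finset.univ \ {b0}, f b := by
    calc 2 * (Fintype.card β - 1) = ∑ _b ∈ Finset.univ \ {b0}, 2 := by
          rw [Finset.sum_const, hcard]; ring
      _ ≤ _ := Finset.sum_le_sum (fun b hb => h b (by
          rw [Finset.mem_sdiff, Finset.mem_singleton] at hb; exact hb.2))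
  omega

lemma exists_third {β : Type*} [Fintype β] [DecidableEq β] (h : 3 ≤ Fintype.card β)
    (a b : β) : ∃ c, c ≠ a ∧ c ≠ b := by
  have hcard : 1 ≤ (Finset.univ \ {a, b}).card := by
    rw [Finset.card_univ_diff]
    have := Finset.card_insert_le a ({b} : Finset β)
    have := Finset.card_singleton b
    omega
  obtain ⟨c, hc⟩ := Finset.card_pos.mp hcard
  rw [Finset.mem_sdiff, Finset.mem_insert, Finset.mem_singleton] at hc
  exact ⟨c, by tauto⟩

/-- Spanning predicates. -/
def pSpan (σ : Config K L) : Prop := (∀ y, ∃ x, σ (x, y) = 1) ∧ (∀ x, ∃ y, σ (x, y) = 1)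
def mSpan (σ : Config K L) : Prop := (∀ y, ∃ x, σ (x, y) = 2) ∧ (∀ x, ∃ y, σ (x, y) = 2)
def SH (σ : Config K L) : Prop := ∀ y, (∀ x, σ (x, y) = 1) ∨ (∀ x, σ (x, y) = 2)
def SV (σ : Config K L) : Prop := ∀ x, (∀ y, σ (x, y) = 1) ∨ (∀ y, σ (x, y) = 2)
def SH1 (σ : Config K L) : Prop := ∃ y0, (∀ x, σ (x, y0) = 2) ∧ ∀ y, y ≠ y0 → ∀ x, σ (x, y) = 1
def SV1 (σ : Config K L) : Prop := ∃ x0, (∀ y, σ (x0, y) = 2) ∧ ∀ x, x ≠ x0 → ∀ y, σ (x, y) = 1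
def Inv (σ : Config K L) : Prop := pSpan K L σ ∨ SH1 K L σ ∨ SV1 K L σ

theorem classify (σ : Config K L) (hKL : K ≤ L)
    (haK : nVtx K L σ 0 < K) (haL : nVtx K L σ 0 < L)
    (hM : slotSum K L wM σ ≤ 2 * K + 1) :
    pSpan K L σ ∨ mSpan K L σ ∨ SH K L σ ∨ SV K L σ := by
  have hsplit := slotSum_eq K L wM σ
  have hKcard : Fintype.card (ZMod K) = K := ZMod.card K
  have hLcard : Fintype.card (ZMod L) = L := ZMod.card L
  by_cases hp : pSpan K L σ
  · exact Or.inl hp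
  by_cases hm : mSpan K L σ
  · exact Or.inr (Or.inl hm)
  rw [pSpan, not_and_or] at hp
  rw [mSpan, not_and_or] at hm
  push_neg at hp hm
  -- helper: a column with given entries is expensive
  have colbound : ∀ (x : ZMod K) (y1 y2 : ZMod L), σ (x, y1) ≠ 1 → σ (x, y2) ≠ 2 →
      2 ≤ colSum K L wM σ x := by
    intro x y1 y2 h1 h2
    by_cases heq : σ (x, y1) = σ (x, y2)
    · have h0 : σ (x, y1) = 0 := spin_not1_not2 _ h1 (by rw [heq]; exact h2)
      have : ∃ y3, σ (x, y3) ≠ 0 := by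
        by_contra hno
        push_neg at hno
        exact absurd (colAllZero_le K L σ x hno) (by omega)
      obtain ⟨y3, hy3⟩ := this
      have := col_zero_ge K L σ x h0 hy3
      omega
    · exact col_mixed_ge K L σ x heq
  have rowbound : ∀ (y : ZMod L) (x1 x2 : ZMod K), σ (x1, y) ≠ 1 → σ (x2, y) ≠ 2 →
      2 ≤ rowSum K L wM σ y := by
    intro y x1 x2 h1 h2
    by_cases heq : σ (x1, y) = σ (x2, y)
    · have h0 : σ (x1, y) = 0 := spin_not1_not2 _ h1 (by rw [heq]; exact h2)
      have : ∃ x3, σ (x3, y) ≠ 0 := by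
        by_contra hno
        push_neg at hno
        exact absurd (rowAllZero_le K L σ y hno) (by omega)
      obtain ⟨x3, hx3⟩ := this
      have := row_zero_ge K L σ y h0 hx3
      omega
    · exact row_mixed_ge K L σ y heq
  rcases hp with ⟨y0, hy0⟩ | ⟨x0, hx0⟩ <;> rcases hm with ⟨y1, hy1⟩ | ⟨x1, hx1⟩
  · -- case (i): row y0 without 1, row y1 without 2
    have hcols : ∀ x, 2 ≤ colSum K L wM σ x := fun x => colbound x y0 y1 (hy0 x) (hy1 x)
    have hSC : 2 * K ≤ ∑ x : ZMod K, colSum K L wM σ x := by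
      have := sum_ge_all (colSum K L wM σ) hcols
      rwa [hKcard] at this
    have hSR : ∑ y : ZMod L, rowSum K L wM σ y ≤ 1 := by omega
    have hrowconst : ∀ (y : ZMod L) (x x' : ZMod K), σ (x, y) = σ (x', y) := by
      intro y x x'
      by_contra hne
      have h2 := row_mixed_ge K L σ y hne
      have : rowSum K L wM σ y ≤ ∑ y : ZMod L, rowSum K L wM σ y :=
        Finset.single_le_sum (fun _ _ => Nat.zero_le _) (Finset.mem_univ y)
      omega
    refine Or.inr (Or.inr (Or.inl ?_))
    intro y
    have hconst : ∀ x, σ (x, y) = σ (0, y) := fun x => hrowconst y x 0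
    rcases spin_cases (σ (0, y)) with h0 | h1 | h2
    · exfalso
      have : ∀ x, σ (x, y) = 0 := fun x => by rw [hconst x, h0]
      exact absurd (rowAllZero_le K L σ y this) (by omega)
    · exact Or.inl (fun x => by rw [hconst x, h1])
    · exact Or.inr (fun x => by rw [hconst x, h2])
  · -- case (ii): row y0 without 1, column x1 without 2
    exfalso
    have h0 : σ (x1, y0) = 0 := spin_not1_not2 _ (hy0 x1) (hx1 y0)
    by_cases hpure : ∃ x2, ∀ y, σ (x2, y) = 2
    · obtain ⟨x2, hx2⟩ := hpure
      have hrows : ∀ y, 2 ≤ rowSum K L wM σ y := by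
        intro y
        apply row_mixed_ge K L σ y (x1 := x2) (x2 := x1)
        rw [hx2 y]
        exact fun hh => hx1 y hh.symm
      have hy0row : 4 ≤ rowSum K L wM σ y0 :=
        row_zero_ge K L σ y0 h0 (by rw [hx2 y0]; decide)
      have := sum_ge_all_plus (rowSum K L wM σ) y0 hrows hy0row
      rw [hLcard] at this
      omega
    · push_neg at hpure
      have hcols : ∀ x, 2 ≤ colSum K L wM σ x := by
        intro x
        rcases spin_cases (σ (x, y0)) with h0' | h1' | h2'
        · have : ∃ y3, σ (x, y3) ≠ 0 := by
            by_contra hno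
            push_neg at hno
            exact absurd (colAllZero_le K L σ x hno) (by omega)
          obtain ⟨y3, hy3⟩ := this
          have := col_zero_ge K L σ x h0' hy3
          omega
        · exact absurd h1' (hy0 x)
        · obtain ⟨y2, hy2⟩ := hpure x
          exact col_mixed_ge K L σ x (y1 := y0) (y2 := y2) (by rw [h2']; exact fun hh => hy2 hh.symm)
      have hx1col : 4 ≤ colSum K L wM σ x1 := by
        have : ∃ y3, σ (x1, y3) ≠ 0 := by
          by_contra hno
          push_neg at hno
          exact absurd (colAllZero_le K L σ x1 hno) (by omega)
        obtain ⟨y3, hy3⟩ := this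
        exact col_zero_ge K L σ x1 h0 hy3
      have := sum_ge_all_plus (colSum K L wM σ) x1 hcols hx1col
      rw [hKcard] at this
      omega
  · -- case (iii): column x0 without 1, row y1 without 2
    exfalso
    have h0 : σ (x0, y1) = 0 := spin_not1_not2 _ (hx0 y1) (hy1 x0)
    by_cases hpure : ∃ x2, ∀ y, σ (x2, y) = 1
    · obtain ⟨x2, hx2⟩ := hpure
      have hrows : ∀ y, 2 ≤ rowSum K L wM σ y := by
        intro y
        apply row_mixed_ge K L σ y (x1 := x2) (x2 := x0)
        rw [hx2 y]
        exact fun hh => hx0 y hh.symm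
      have hy1row : 4 ≤ rowSum K L wM σ y1 :=
        row_zero_ge K L σ y1 h0 (by rw [hx2 y1]; decide)
      have := sum_ge_all_plus (rowSum K L wM σ) y1 hrows hy1row
      rw [hLcard] at this
      omega
    · push_neg at hpure
      have hcols : ∀ x, 2 ≤ colSum K L wM σ x := by
        intro x
        rcases spin_cases (σ (x, y1)) with h0' | h1' | h2'
        · have : ∃ y3, σ (x, y3) ≠ 0 := by
            by_contra hno
            push_neg at hno
            exact absurd (colAllZero_le K L σ x hno) (by omega)
          obtain ⟨y3, hy3⟩ := this
          have := col_zero_ge K L σ x h0' hy3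
          omega
        · obtain ⟨y2, hy2⟩ := hpure x
          exact col_mixed_ge K L σ x (y1 := y1) (y2 := y2) (by rw [h1']; exact fun hh => hy2 hh.symm)
        · exact absurd h2' (hy1 x)
      have hx0col : 4 ≤ colSum K L wM σ x0 := by
        have : ∃ y3, σ (x0, y3) ≠ 0 := by
          by_contra hno
          push_neg at hno
          exact absurd (colAllZero_le K L σ x0 hno) (by omega)
        obtain ⟨y3, hy3⟩ := this
        exact col_zero_ge K L σ x0 h0 hy3
      have := sum_ge_all_plus (colSum K L wM σ) x0 hcols hx0col
      rw [hKcard] at this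
      omega
  · -- case (iv): column x0 without 1, column x1 without 2
    have hrows : ∀ y, 2 ≤ rowSum K L wM σ y := fun y => rowbound y x0 x1 (hx0 y) (hx1 y)
    have hSR : 2 * L ≤ ∑ y : ZMod L, rowSum K L wM σ y := by
      have := sum_ge_all (rowSum K L wM σ) hrows
      rwa [hLcard] at this
    have hSC : ∑ x : ZMod K, colSum K L wM σ x ≤ 1 := by omega
    have hcolconst : ∀ (x : ZMod K) (y y' : ZMod L), σ (x, y) = σ (x, y') := by
      intro x y y'
      by_contra hne
      have h2 := col_mixed_ge K L σ x hne
      have : colSum K L wM σ x ≤ ∑ x : ZMod K, colSum K L wM σ x :=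
        Finset.single_le_sum (fun _ _ => Nat.zero_le _) (Finset.mem_univ x)
      omega
    refine Or.inr (Or.inr (Or.inr ?_))
    intro x
    have hconst : ∀ y, σ (x, y) = σ (x, 0) := fun y => hcolconst x y 0
    rcases spin_cases (σ (x, 0)) with h0 | h1 | h2
    · exfalso
      have : ∀ y, σ (x, y) = 0 := fun y => by rw [hconst y, h0]
      exact absurd (colAllZero_le K L σ x this) (by omega)
    · exact Or.inl (fun y => by rw [hconst y, h1])
    · exact Or.inr (fun y => by rw [hconst y, h2])

end Classify

section Step

open Finset

variable (K L : ℕ) [NeZero K] [NeZero L]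

lemma Inv_const1 : Inv K L (const K L 1) :=
  Or.inl ⟨fun _ => ⟨0, rfl⟩, fun _ => ⟨0, rfl⟩⟩

lemma not_Inv_const2 (hK2 : 2 ≤ K) (hL2 : 2 ≤ L) : ¬ Inv K L (const K L 2) := by
  intro h
  rcases h with ⟨h1, -⟩ | ⟨y0, -, h1⟩ | ⟨x0, -, h1⟩
  · obtain ⟨x, hx⟩ := h1 0
    simp only [const] at hx
    exact absurd hx (by decide)
  · obtain ⟨y, hy⟩ := Fintype.exists_ne_of_one_lt_card (by rw [ZMod.card]; omega) y0
    have := h1 y hy 0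
    simp only [const] at this
    exact absurd this (by decide)
  · obtain ⟨x, hx⟩ := Fintype.exists_ne_of_one_lt_card (by rw [ZMod.card]; omega) x0
    have := h1 x hx 0
    simp only [const] at this
    exact absurd this (by decide)

theorem step_Inv (σ σ' : Config K L) (hKL : K ≤ L) (hK3 : 3 ≤ K) (hL3 : 3 ≤ L)
    (haK : nVtx K L σ' 0 < K) (haL : nVtx K L σ' 0 < L)
    (hM : slotSum K L wM σ ≤ 2 * K + 1) (hM' : slotSum K L wM σ' ≤ 2 * K + 1)
    (hflip : SingleFlip K L σ σ') (hI : Inv K L σ) : Inv K L σ' := by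
  obtain ⟨v, hv, hagree⟩ := hflip
  have hKcard : Fintype.card (ZMod K) = K := ZMod.card K
  have hLcard : Fintype.card (ZMod L) = L := ZMod.card L
  have hsplit := slotSum_eq K L wM σ
  -- second coordinates distinct implies vertices distinct
  have hne1 : ∀ (x : ZMod K) (y : ZMod L), x ≠ v.1 → (x, y) ≠ v := by
    intro x y hx h
    exact hx (by rw [← h])
  have hne2 : ∀ (x : ZMod K) (y : ZMod L), y ≠ v.2 → (x, y) ≠ v := by
    intro x y hy h
    exact hy (by rw [← h])
  -- σ is row-constant when SH1, col-constant when SV1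
  rcases classify K L σ' hKL haK haL hM' with hp' | hm' | hsh' | hsv'
  · exact Or.inl hp'
  · -- σ' mSpan : impossible
    exfalso
    rcases hI with hp | ⟨y0, hy0, hy0'⟩ | ⟨x0, hx0, hx0'⟩
    · -- σ pSpan : energy too large
      have hrows : ∀ y : ZMod L, y ≠ v.2 → 2 ≤ rowSum K L wM σ y := by
        intro y hy
        obtain ⟨x1, hx1⟩ := hp.1 y
        obtain ⟨x2, hx2⟩ := hm'.1 y
        have hx2' : σ (x2, y) = 2 := by rw [hagree _ (hne2 x2 y hy)]; exact hx2
        exact row_mixed_ge K L σ y (x1 := x1) (x2 := x2) (by rw [hx1, hx2']; decide)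
      have hcols : ∀ x : ZMod K, x ≠ v.1 → 2 ≤ colSum K L wM σ x := by
        intro x hx
        obtain ⟨y1, hy1⟩ := hp.2 x
        obtain ⟨y2, hy2⟩ := hm'.2 x
        have hy2' : σ (x, y2) = 2 := by rw [hagree _ (hne1 x y2 hx)]; exact hy2
        exact col_mixed_ge K L σ x (y1 := y1) (y2 := y2) (by rw [hy1, hy2']; decide)
      have h1 := sum_ge_off_one (rowSum K L wM σ) v.2 hrows
      have h2 := sum_ge_off_one (colSum K L wM σ) v.1 hcols
      rw [hLcard] at h1
      rw [hKcard] at h2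
      omega
    · -- σ SH1 : an all-1 row of σ' remains
      obtain ⟨y, hy1, hy2⟩ := exists_third (by rw [hLcard]; omega) y0 v.2
      obtain ⟨x, hx⟩ := hm'.1 y
      have : σ (x, y) = 2 := by rw [hagree _ (hne2 x y hy2)]; exact hx
      rw [hy0' y hy1 x] at this
      exact absurd this (by decide)
    · -- σ SV1
      obtain ⟨x, hx1, hx2⟩ := exists_third (by rw [hKcard]; omega) x0 v.1
      obtain ⟨y, hy⟩ := hm'.2 x
      have : σ (x, y) = 2 := by rw [hagree _ (hne1 x y hx2)]; exact hy
      rw [hx0' x hx1 y] at this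
      exact absurd this (by decide)
  · -- σ' SH
    by_cases hex : ∃ y, ∀ x, σ' (x, y) = 2
    · obtain ⟨y2, hy2⟩ := hex
      rcases hI with hp | ⟨y0, hy0, hy0'⟩ | ⟨x0, hx0, hx0'⟩
      · -- σ pSpan ⇒ SH1 σ' with the 2-row at v.2
        have huniq : ∀ y, (∀ x, σ' (x, y) = 2) → y = v.2 := by
          intro y hy
          by_contra hne
          obtain ⟨x1, hx1⟩ := hp.1 y
          have : σ' (x1, y) = σ (x1, y) := (hagree _ (hne2 x1 y hne)).symm
          rw [hy x1, hx1] at this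
          exact absurd this (by decide)
        refine Or.inr (Or.inl ⟨v.2, ?_, ?_⟩)
        · rw [← huniq y2 hy2]; exact hy2
        · intro y hy x
          rcases hsh' y with h1 | h2
          · exact h1 x
          · exact absurd (huniq y h2) hy
      · -- σ SH1, σ' SH : impossible
        exfalso
        obtain ⟨x, hx⟩ := Fintype.exists_ne_of_one_lt_card (by rw [hKcard]; omega) v.1
        have hσrow : σ (v.1, v.2) = σ (x, v.2) := by
          by_cases hy : v.2 = y0
          · rw [hy, hy0 v.1, hy0 x]
          · rw [hy0' v.2 hy v.1, hy0' v.2 hy x]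
        have hσ'row : σ' (v.1, v.2) = σ' (x, v.2) := by
          rcases hsh' v.2 with h1 | h2
          · rw [h1 v.1, h1 x]
          · rw [h2 v.1, h2 x]
        have hagx : σ (x, v.2) = σ' (x, v.2) := hagree _ (hne1 x v.2 hx)
        apply hv
        rw [show v = (v.1, v.2) from rfl, hσrow, hagx, ← hσ'row]
      · -- σ SV1, σ' SH : impossible
        exfalso
        obtain ⟨y, hy⟩ := Fintype.exists_ne_of_one_lt_card (by rw [hLcard]; omega) v.2
        obtain ⟨x1, hx1⟩ := Fintype.exists_ne_of_one_lt_card (by rw [hKcard]; omega) x0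
        have h2 : σ' (x0, y) = 2 := by rw [← hagree _ (hne2 x0 y hy)]; exact hx0 y
        have h1 : σ' (x1, y) = 1 := by rw [← hagree _ (hne2 x1 y hy)]; exact hx0' x1 hx1 y
        rcases hsh' y with hall | hall
        · rw [hall x0] at h2; exact absurd h2 (by decide)
        · rw [hall x1] at h1; exact absurd h1 (by decide)
    · -- no all-2 row : σ' is constant 1, hence pSpan
      push_neg at hex
      left
      constructor
      · intro y
        rcases hsh' y with h1 | h2
        · exact ⟨0, h1 0⟩
        · obtain ⟨x, hx⟩ := hex y
          exact absurd (h2 x) hx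
      · intro x
        rcases hsh' 0 with h1 | h2
        · exact ⟨0, h1 x⟩
        · obtain ⟨x', hx'⟩ := hex 0
          exact absurd (h2 x') hx'
  · -- σ' SV
    by_cases hex : ∃ x, ∀ y, σ' (x, y) = 2
    · obtain ⟨x2, hx2⟩ := hex
      rcases hI with hp | ⟨y0, hy0, hy0'⟩ | ⟨x0, hx0, hx0'⟩
      · -- σ pSpan ⇒ SV1 σ'
        have huniq : ∀ x, (∀ y, σ' (x, y) = 2) → x = v.1 := by
          intro x hx
          by_contra hne
          obtain ⟨y1, hy1⟩ := hp.2 x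
          have : σ' (x, y1) = σ (x, y1) := (hagree _ (hne1 x y1 hne)).symm
          rw [hx y1, hy1] at this
          exact absurd this (by decide)
        refine Or.inr (Or.inr ⟨v.1, ?_, ?_⟩)
        · rw [← huniq x2 hx2]; exact hx2
        · intro x hx y
          rcases hsv' x with h1 | h2
          · exact h1 y
          · exact absurd (huniq x h2) hx
      · -- σ SH1, σ' SV : impossible
        exfalso
        obtain ⟨x, hx⟩ := Fintype.exists_ne_of_one_lt_card (by rw [hKcard]; omega) v.1
        obtain ⟨y1, hy1⟩ := Fintype.exists_ne_of_one_lt_card (by rw [hLcard]; omega) y0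
        have h2 : σ' (x, y0) = 2 := by rw [← hagree _ (hne1 x y0 hx)]; exact hy0 x
        have h1 : σ' (x, y1) = 1 := by rw [← hagree _ (hne1 x y1 hx)]; exact hy0' y1 hy1 x
        rcases hsv' x with hall | hall
        · rw [hall y0] at h2; exact absurd h2 (by decide)
        · rw [hall y1] at h1; exact absurd h1 (by decide)
      · -- σ SV1, σ' SV : impossible
        exfalso
        obtain ⟨y, hy⟩ := Fintype.exists_ne_of_one_lt_card (by rw [hLcard]; omega) v.2
        have hσcol : σ (v.1, v.2) = σ (v.1, y) := by
          by_cases hx : v.1 = x0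
          · rw [hx, hx0 v.2, hx0 y]
          · rw [hx0' v.1 hx v.2, hx0' v.1 hx y]
        have hσ'col : σ' (v.1, v.2) = σ' (v.1, y) := by
          rcases hsv' v.1 with h1 | h2
          · rw [h1 v.2, h1 y]
          · rw [h2 v.2, h2 y]
        have hagy : σ (v.1, y) = σ' (v.1, y) := hagree _ (hne2 v.1 y hy)
        apply hv
        rw [show v = (v.1, v.2) from rfl, hσcol, hagy, ← hσ'col]
    · push_neg at hex
      left
      constructor
      · intro y
        rcases hsv' 0 with h1 | h2
        · exact ⟨0, h1 y⟩
        · obtain ⟨y', hy'⟩ := hex 0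
          exact absurd (h2 y') hy'
      · intro x
        rcases hsv' x with h1 | h2
        · exact ⟨0, h1 0⟩
        · obtain ⟨y', hy'⟩ := hex x
          exact absurd (h2 y') hy'

end Step

section Numerics

open Finset

variable (K L : ℕ) [NeZero K] [NeZero L]

lemma slotSum_wM_split (σ : Config K L) :
    slotSum K L wM σ = slotSum K L w12 σ + 2 * slotSum K L wP σ := by
  unfold slotSum
  rw [Finset.mul_sum, ← Finset.sum_add_distrib]
  exact Finset.sum_congr rfl (fun p _ => wM_eq _ _)

/-- The abstract numeric inequality behind the subcritical estimate. -/
lemma T_ineq (γ1 γ23 A : ℝ) (l k : ℕ) (hγ1 : 0 < γ1) (hγ23 : 0 < γ23)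
    (hl2 : 2 ≤ l) (hK : 2 * l ^ 2 ≤ k)
    (hA1 : γ1 * ((l : ℝ) - 1) ≤ A)
    (hB : 2 * ((k : ℝ) + 1) * γ23 = 4 * A * l - 2 * γ1 * ((l : ℝ) ^ 2 - l + 1)) :
    γ1 * ((l : ℝ) ^ 2 - l) ≤ (2 * (l : ℝ) - 1) * (A - 2 * γ23) := by
  have hlr : (2 : ℝ) ≤ (l : ℝ) := by exact_mod_cast hl2
  have hKr : 2 * (l : ℝ) ^ 2 ≤ (k : ℝ) := by exact_mod_cast hK
  have hKpos : (0 : ℝ) < (k : ℝ) + 1 := by positivity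
  -- enough to prove after multiplying by (k+1)
  rw [← sub_nonneg]
  have hmain : 0 ≤ ((2 * (l : ℝ) - 1) * (A - 2 * γ23) - γ1 * ((l : ℝ) ^ 2 - l)) * ((k : ℝ) + 1) := by
    have hsub : (2 * (l : ℝ) - 1) * (2 * γ23) * ((k:ℝ) + 1)
        = (2 * (l : ℝ) - 1) * (4 * A * l - 2 * γ1 * ((l : ℝ) ^ 2 - l + 1)) := by
      rw [← hB]; ring
    have hcoef : 0 ≤ (2 * (l:ℝ) - 1) * A - γ1 * ((l:ℝ)^2 - l) := by
      nlinarith [mul_le_mul_of_nonneg_left hA1 (by linarith : (0:ℝ) ≤ 2 * (l:ℝ) - 1),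
        sq_nonneg ((l:ℝ) - 1)]
    have hexp : ((2 * (l : ℝ) - 1) * (A - 2 * γ23) - γ1 * ((l : ℝ) ^ 2 - l)) * ((k : ℝ) + 1)
        = ((2 * (l:ℝ) - 1) * A - γ1 * ((l:ℝ)^2 - l)) * ((k:ℝ) + 1)
          - (2 * (l : ℝ) - 1) * (4 * A * l - 2 * γ1 * ((l : ℝ) ^ 2 - l + 1)) := by
      rw [← hsub]; ring
    rw [hexp]
    have hstep : ((2 * (l:ℝ) - 1) * A - γ1 * ((l:ℝ)^2 - l)) * (2 * (l:ℝ)^2 + 1)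
        - (2 * (l : ℝ) - 1) * (4 * A * l - 2 * γ1 * ((l : ℝ) ^ 2 - l + 1)) ≥ 0 := by
      have hf1 : (0:ℝ) ≤ 2 * (l:ℝ) - 1 := by linarith
      have hf2 : (0:ℝ) ≤ 2 * (l:ℝ)^2 - 4 * l + 1 := by nlinarith [mul_nonneg (by linarith : (0:ℝ) ≤ (l:ℝ)) (by linarith : (0:ℝ) ≤ (l:ℝ) - 2)]
      nlinarith [mul_le_mul_of_nonneg_left hA1 (mul_nonneg hf1 hf2),
        mul_nonneg (mul_nonneg hγ1.le (by nlinarith : (0:ℝ) ≤ ((l:ℝ) - 2)^2)) (sq_nonneg (l:ℝ)),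
        sq_nonneg ((l:ℝ) - 2), sq_nonneg (l:ℝ), hγ1.le]
    nlinarith [mul_le_mul_of_nonneg_left (by linarith : 2 * (l:ℝ)^2 + 1 ≤ (k:ℝ) + 1) hcoef]
  nlinarith [hmain, hKpos]

end Numerics

section GapBounds

open Finset

variable (K L : ℕ) [NeZero K] [NeZero L] (C : Couplings)

/-- Facts extracted from admissibility. -/
lemma gamma1_pos (hadm : Admissible K L C) : 0 < C.γ1 := by
  have := hadm.h1122; rw [Couplings.γ1]; linarith

lemma gamma23_pos (hadm : Admissible K L C) : 0 < C.γ23 := by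
  have := hadm.pos23; have := hadm.pos22; rw [Couplings.γ23]; linarith

lemma beta_pos (hadm : Admissible K L C) :
    1 < (2 * C.γ12 + C.γ1) / (2 * C.γ1) := by
  have h1 := gamma1_pos K L C hadm
  have h23 := gamma23_pos K L C hadm
  have hC := hadm.hC
  rw [lt_div_iff₀ (by linarith : (0:ℝ) < 2 * C.γ1)]
  linarith

lemma lstar_ge_two (hadm : Admissible K L C) : 2 ≤ lstar C := by
  rw [lstar]
  have := beta_pos K L C hadm
  have : (1:ℕ) < ⌈(2 * C.γ12 + C.γ1) / (2 * C.γ1)⌉₊ := by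
    rw [Nat.lt_ceil]; push_cast; exact this
  omega

lemma beta_le (hadm : Admissible K L C) :
    (2 * C.γ12 + C.γ1) / (2 * C.γ1) ≤ (lstar C : ℝ) := Nat.le_ceil _

lemma beta_gt (hadm : Admissible K L C) :
    (lstar C : ℝ) - 1 ≤ (2 * C.γ12 + C.γ1) / (2 * C.γ1) := by
  have h0 : (0:ℝ) ≤ (2 * C.γ12 + C.γ1) / (2 * C.γ1) := by
    have := beta_pos K L C hadm; linarith
  have := Nat.ceil_lt_add_one h0
  rw [lstar]
  linarith

/-- A = γ12 + γ1/2 equals γ1 * β. -/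
lemma A_eq (hadm : Admissible K L C) :
    C.γ12 + C.γ1 / 2 = C.γ1 * ((2 * C.γ12 + C.γ1) / (2 * C.γ1)) := by
  have h1 := gamma1_pos K L C hadm
  field_simp

lemma A_lb (hadm : Admissible K L C) :
    C.γ1 * ((lstar C : ℝ) - 1) ≤ C.γ12 + C.γ1 / 2 := by
  rw [A_eq K L C hadm]
  exact mul_le_mul_of_nonneg_left (beta_gt K L C hadm) (gamma1_pos K L C hadm).le

/-- Explicit form of the critical barrier. -/
lemma fh_eq (hadm : Admissible K L C) :
    Γstar C = 4 * (C.γ12 + C.γ1 / 2) * (lstar C : ℝ)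
      - 2 * C.γ1 * ((lstar C : ℝ) ^ 2 - (lstar C : ℝ) + 1) := by
  have h1 := gamma1_pos K L C hadm
  have hx : (C.γ12 + C.γ1 / 2) / C.γ1 = (2 * C.γ12 + C.γ1) / (2 * C.γ1) := by
    rw [div_eq_div_iff (by linarith) (by linarith)]
    ring
  have h0 : (0:ℝ) ≤ (C.γ12 + C.γ1 / 2) / C.γ1 := by
    rw [hx]; have := beta_pos K L C hadm; linarith
  have hceil : ((⌈(C.γ12 + C.γ1 / 2) / C.γ1⌉ : ℤ) : ℝ) = (lstar C : ℝ) := by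
    rw [← natCast_ceil_eq_intCast_ceil h0, lstar, hx]
  rw [Γstar, fh, hceil]

lemma Gamma_star_eq (hadm : Admissible K L C) :
    Γstar C = 2 * ((K : ℝ) + 1) * C.γ23 := by
  have := hadm.hB
  rw [Γstar, this]

/-- In the subcritical regime, the energy gap dominates `γ23` times the interface weight. -/
lemma gap_ge_M (hadm : Admissible K L C) (σ : Config K L)
    (haN : nVtx K L σ 0 ≤ lstar C * (lstar C - 1)) :
    C.γ23 * (slotSum K L wM σ : ℝ) ≤ H K L C σ - H K L C (const K L 1) := by
  set l := lstar C with hldef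
  have hl2 : 2 ≤ l := lstar_ge_two K L C hadm
  have hγ1 := gamma1_pos K L C hadm
  have hγ23 := gamma23_pos K L C hadm
  have hKl : 2 * l ^ 2 ≤ K := hadm.hK
  have hNK : l * (l - 1) < K := by nlinarith [sq_nonneg l, Nat.sub_le l 1]
  have haK : nVtx K L σ 0 < K := lt_of_le_of_lt haN hNK
  have haL : nVtx K L σ 0 < L := lt_of_lt_of_le haK hadm.hKL
  set a := nVtx K L σ 0 with hadef
  set c := (Cset K L σ).card with hcdef
  set r := (Rset K L σ).card with hrdef
  set P := slotSum K L wP σ with hPdef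
  set Epm := slotSum K L w12 σ with hEdef
  have hgap := gap_formula K L C hadm.h2233 hadm.h1213 σ
  have hMsplit := slotSum_wM_split K L σ
  -- numeric chain
  have hcr : a ≤ c * r := a_le_cr K L σ
  have hamin : a ≤ min (c * r) (l * (l - 1)) := le_min hcr haN
  have hkey : min (c * r) (l * (l - 1)) * (2 * l - 1) ≤ l * (l - 1) * (c + r) :=
    key_nat l c r hl2
  have hPge : 2 * (c + r) ≤ P := P_ge K L σ haK haL
  -- real versions
  set A := C.γ12 + C.γ1 / 2 with hAdef
  have hT : C.γ1 * ((l:ℝ)^2 - (l:ℝ)) ≤ (2 * (l:ℝ) - 1) * (A - 2 * C.γ23) := by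
    apply T_ineq C.γ1 C.γ23 A l K hγ1 hγ23 hl2 hKl (by rw [hAdef, hldef]; exact A_lb K L C hadm)
    have h2 := Gamma_star_eq K L C hadm
    rw [fh_eq K L C hadm] at h2
    rw [hAdef, hldef]
    linarith
  have hNr : ((l * (l - 1) : ℕ) : ℝ) = (l:ℝ)^2 - (l:ℝ) := by
    have h5 : ((l - 1 : ℕ) : ℝ) = (l:ℝ) - 1 := by
      rw [Nat.cast_sub (by omega)]; norm_num
    push_cast [h5]
    ring
  have h2l1 : (0:ℝ) < 2 * (l:ℝ) - 1 := by
    have : (2:ℝ) ≤ (l:ℝ) := by exact_mod_cast hl2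
    linarith
  have hAc : C.γ1 ≤ A - 2 * C.γ23 := by
    have hC := hadm.hC
    rw [hAdef]
    linarith
  -- real atoms
  have haminr : (a : ℝ) ≤ ((min (c * r) (l * (l - 1)) : ℕ) : ℝ) := by exact_mod_cast hamin
  have hkeyr : ((min (c * r) (l * (l - 1)) : ℕ) : ℝ) * (2 * (l:ℝ) - 1)
      ≤ ((l * (l - 1) : ℕ) : ℝ) * ((c + r : ℕ) : ℝ) := by
    have hcast : ((2 * l - 1 : ℕ) : ℝ) = 2 * (l:ℝ) - 1 := by
      rw [Nat.cast_sub (by omega)]; push_cast; ring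
    calc ((min (c * r) (l * (l - 1)) : ℕ) : ℝ) * (2 * (l:ℝ) - 1)
        = ((min (c * r) (l * (l - 1)) * (2 * l - 1) : ℕ) : ℝ) := by rw [Nat.cast_mul, hcast]
      _ ≤ ((l * (l - 1) * (c + r) : ℕ) : ℝ) := by exact_mod_cast hkey
      _ = _ := by push_cast; ring
  have hchain : C.γ1 * (a:ℝ) * (2 * (l:ℝ) - 1) ≤ (A - 2 * C.γ23) * ((c + r : ℕ) : ℝ) * (2 * (l:ℝ) - 1) := by
    calc C.γ1 * (a:ℝ) * (2 * (l:ℝ) - 1)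
        ≤ C.γ1 * (((min (c * r) (l * (l - 1)) : ℕ) : ℝ) * (2 * (l:ℝ) - 1)) := by
          rw [mul_assoc]
          apply mul_le_mul_of_nonneg_left _ hγ1.le
          exact mul_le_mul_of_nonneg_right haminr h2l1.le
      _ ≤ C.γ1 * (((l * (l - 1) : ℕ) : ℝ) * ((c + r : ℕ) : ℝ)) :=
          mul_le_mul_of_nonneg_left hkeyr hγ1.le
      _ = (C.γ1 * ((l:ℝ)^2 - (l:ℝ))) * ((c + r : ℕ) : ℝ) := by rw [hNr]; ring
      _ ≤ ((2 * (l:ℝ) - 1) * (A - 2 * C.γ23)) * ((c + r : ℕ) : ℝ) :=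
          mul_le_mul_of_nonneg_right hT (Nat.cast_nonneg _)
      _ = (A - 2 * C.γ23) * ((c + r : ℕ) : ℝ) * (2 * (l:ℝ) - 1) := by ring
  have hstep2 : C.γ1 * (a:ℝ) ≤ (A - 2 * C.γ23) * ((c + r : ℕ) : ℝ) :=
    le_of_mul_le_mul_right hchain h2l1
  have hPr : ((2 * (c + r) : ℕ) : ℝ) ≤ (P : ℝ) := by exact_mod_cast hPge
  have hfinal : 2 * C.γ1 * (a:ℝ) ≤ (A - 2 * C.γ23) * (P : ℝ) := by
    have hApos : (0:ℝ) ≤ A - 2 * C.γ23 := by linarith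
    calc 2 * C.γ1 * (a:ℝ) ≤ 2 * ((A - 2 * C.γ23) * ((c + r : ℕ) : ℝ)) := by linarith
      _ = (A - 2 * C.γ23) * ((2 * (c + r) : ℕ) : ℝ) := by push_cast; ring
      _ ≤ _ := mul_le_mul_of_nonneg_left hPr hApos
  rw [hgap]
  have hMr : (slotSum K L wM σ : ℝ) = ((Epm : ℕ) : ℝ) + 2 * ((P : ℕ) : ℝ) := by
    rw [hMsplit]; push_cast; ring
  rw [hMr]
  nlinarith [hfinal]

/-- At the critical droplet volume the gap is at least `Γ*`. -/
lemma gap_crit (hadm : Admissible K L C) (σ : Config K L)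
    (ha : nVtx K L σ 0 = lstar C * (lstar C - 1) + 1) :
    Γstar C ≤ H K L C σ - H K L C (const K L 1) := by
  set l := lstar C with hldef
  have hl2 : 2 ≤ l := lstar_ge_two K L C hadm
  have hγ1 := gamma1_pos K L C hadm
  have hγ23 := gamma23_pos K L C hadm
  have hKl : 2 * l ^ 2 ≤ K := hadm.hK
  have haK : nVtx K L σ 0 < K := by
    rw [ha]; nlinarith [sq_nonneg l, Nat.sub_le l 1]
  have haL : nVtx K L σ 0 < L := lt_of_lt_of_le haK hadm.hKL
  have hcr : nVtx K L σ 0 ≤ (Cset K L σ).card * (Rset K L σ).card := a_le_cr K L σ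
  have hsum : 2 * l ≤ (Cset K L σ).card + (Rset K L σ).card :=
    key_nat2 l _ _ hl2 (by omega)
  have hPge : 2 * ((Cset K L σ).card + (Rset K L σ).card) ≤ slotSum K L wP σ :=
    P_ge K L σ haK haL
  have hP4l : 4 * l ≤ slotSum K L wP σ := by omega
  have hgap := gap_formula K L C hadm.h2233 hadm.h1213 σ
  have hApos : (0:ℝ) < C.γ12 + C.γ1 / 2 := by
    have h12 := hadm.pos12
    have h22 := hadm.pos22
    have : C.γ12 = C.J12 + C.J22 := rfl
    linarith
  have hP4lr : 4 * (l:ℝ) ≤ ((slotSum K L wP σ : ℕ) : ℝ) := by exact_mod_cast hP4l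
  have har : ((nVtx K L σ 0 : ℕ) : ℝ) = (l:ℝ) * ((l:ℝ) - 1) + 1 := by
    rw [show nVtx K L σ 0 = l * (l - 1) + 1 from ha]
    have h5 : ((l - 1 : ℕ) : ℝ) = (l:ℝ) - 1 := by
      rw [Nat.cast_sub (by omega)]; norm_num
    push_cast [h5]
    ring
  have hEpm : (0:ℝ) ≤ C.γ23 * ((slotSum K L w12 σ : ℕ) : ℝ) :=
    mul_nonneg hγ23.le (Nat.cast_nonneg _)
  have h1 : 4 * (C.γ12 + C.γ1 / 2) * (l:ℝ) ≤ (C.γ12 + C.γ1 / 2) * ((slotSum K L wP σ : ℕ) : ℝ) := by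
    calc 4 * (C.γ12 + C.γ1 / 2) * (l:ℝ) = (C.γ12 + C.γ1 / 2) * (4 * (l:ℝ)) := by ring
      _ ≤ _ := mul_le_mul_of_nonneg_left hP4lr hApos.le
  rw [fh_eq K L C hadm, hgap, har, ← hldef]
  nlinarith [h1, hEpm]

/-- Below the barrier and subcritical, the interface weight is at most `2K+1`. -/
lemma M_le (hadm : Admissible K L C) (σ : Config K L)
    (haN : nVtx K L σ 0 ≤ lstar C * (lstar C - 1))
    (hgap : H K L C σ - H K L C (const K L 1) < Γstar C) :
    slotSum K L wM σ ≤ 2 * K + 1 := by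
  have h1 := gap_ge_M K L C hadm σ haN
  have h2 := Gamma_star_eq K L C hadm
  have hγ23 := gamma23_pos K L C hadm
  have h3 : C.γ23 * (slotSum K L wM σ : ℝ) < C.γ23 * (2 * ((K:ℝ) + 1)) := by
    rw [mul_comm C.γ23 (2 * ((K:ℝ) + 1))] at *
    calc C.γ23 * (slotSum K L wM σ : ℝ) ≤ _ := h1
      _ < _ := by rw [← h2]; exact hgap
  have h4 : (slotSum K L wM σ : ℝ) < 2 * ((K:ℝ) + 1) :=
    lt_of_mul_lt_mul_left h3 hγ23.le
  have : (slotSum K L wM σ : ℝ) < ((2 * K + 2 : ℕ) : ℝ) := by push_cast; linarith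
  have := Nat.cast_lt (α := ℝ) |>.mp this
  omega

end GapBounds

section Assembly

open Finset

variable (K L : ℕ) [NeZero K] [NeZero L]

lemma nVtx_const1 : nVtx K L (const K L 1) 0 = 0 := by
  have h : (Finset.univ.filter fun v : Vtx K L => const K L 1 v = 0) = ∅ := by
    rw [Finset.filter_eq_empty_iff]
    intro v _
    simp only [const]
    decide
  rw [nVtx, h, Finset.card_empty]

/-- A straight path from `𝟐` to `𝟑`, flipping the vertices one by one. -/
noncomputable def sweepPath : Path K L where
  len := Fintype.card (Vtx K L)
  toFun := fun n v => if ((Fintype.equivFin (Vtx K L)) v : ℕ) < n then 2 else 1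
  step := by
    intro n hn
    classical
    refine ⟨(Fintype.equivFin (Vtx K L)).symm ⟨n, hn⟩, ?_, ?_⟩
    · simp only [Equiv.apply_symm_apply, lt_self_iff_false, if_false, Nat.lt_succ_self, if_true]
      decide
    · intro w hw
      have hne : ((Fintype.equivFin (Vtx K L)) w : ℕ) ≠ n := by
        intro h
        apply hw
        have h2 : (Fintype.equivFin (Vtx K L)) w = ⟨n, hn⟩ := Fin.ext h
        rw [← h2, Equiv.symm_apply_apply]
      by_cases h : ((Fintype.equivFin (Vtx K L)) w : ℕ) < n
      · simp only [h, if_true, Nat.lt_succ_of_lt h]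
      · have h2 : ¬ (((Fintype.equivFin (Vtx K L)) w : ℕ) < n + 1) := by omega
        simp only [h, h2, if_false]

lemma sweepPath_fromTo : (sweepPath K L).FromTo (const K L 1) (const K L 2) := by
  constructor
  · funext v
    simp only [sweepPath, Nat.not_lt_zero, if_false, const]
  · funext v
    simp only [sweepPath, const]
    rw [if_pos (Fin.is_lt _)]

end Assembly
end LB
theorem communication_height_lower_bound_between_metastable (K L : ℕ) [NeZero K] [NeZero L] (C : Couplings)
    (hadm : Admissible K L C) :
    Γstar C ≤ Gamma K L C (const K L 1) (const K L 2) := by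
  classical
  set θ := H K L C (const K L 1) + Γstar C with hθ
  have hl2 := LB.lstar_ge_two K L C hadm
  have hKl : 2 * lstar C ^ 2 ≤ K := hadm.hK
  have hK8 : 8 ≤ K := by
    have h4 : 2 ^ 2 ≤ lstar C ^ 2 := Nat.pow_le_pow_left hl2 2
    omega
  have hL8 : 8 ≤ L := le_trans hK8 hadm.hKL
  have hNK : lstar C * (lstar C - 1) < K := by
    nlinarith [sq_nonneg (lstar C), Nat.sub_le (lstar C) 1]
  have key : ∀ ω : Path K L, ω.FromTo (const K L 1) (const K L 2) →
      ∃ n ≤ ω.len, θ ≤ H K L C (ω.toFun n) := by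
    intro ω hft
    by_contra hcon
    push_neg at hcon
    have hgap : ∀ n, n ≤ ω.len → H K L C (ω.toFun n) - H K L C (const K L 1) < Γstar C := by
      intro n hn
      have := hcon n hn
      rw [hθ] at this
      linarith
    have f0 : nVtx K L (ω.toFun 0) 0 = 0 := by
      rw [hft.1]; exact LB.nVtx_const1 K L
    by_cases hcrit : ∃ n ≤ ω.len, lstar C * (lstar C - 1) + 1 ≤ nVtx K L (ω.toFun n) 0
    · obtain ⟨n, hn, hcr⟩ := hcrit
      obtain ⟨m, hm, hfm⟩ := LB.nat_ivt (fun k => nVtx K L (ω.toFun k) 0) n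
        (lstar C * (lstar C - 1) + 1)
        (fun k hk => LB.nVtx_flip_le K L _ _ (ω.step k (lt_of_lt_of_le hk hn)))
        f0 hcr
      have hge := LB.gap_crit K L C hadm (ω.toFun m) hfm
      have hlt := hgap m (le_trans hm hn)
      linarith
    · push_neg at hcrit
      have hbnd : ∀ n ≤ ω.len, nVtx K L (ω.toFun n) 0 ≤ lstar C * (lstar C - 1) := by
        intro n hn
        have := hcrit n hn
        omega
      have hInv : ∀ n ≤ ω.len, LB.Inv K L (ω.toFun n) := by
        intro n
        induction n with
        | zero => intro _; rw [hft.1]; exact LB.Inv_const1 K L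
        | succ m ih =>
          intro hm
          have hm' : m ≤ ω.len := by omega
          exact LB.step_Inv K L (ω.toFun m) (ω.toFun (m + 1)) hadm.hKL (by omega) (by omega)
            (lt_of_le_of_lt (hbnd (m + 1) hm) hNK)
            (lt_of_lt_of_le (lt_of_le_of_lt (hbnd (m + 1) hm) hNK) hadm.hKL)
            (LB.M_le K L C hadm _ (hbnd m hm') (hgap m hm'))
            (LB.M_le K L C hadm _ (hbnd (m + 1) hm) (hgap (m + 1) hm))
            (ω.step m (by omega))
            (ih hm')
      have hend := hInv ω.len (le_refl _)
      rw [hft.2] at hend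
      exact LB.not_Inv_const2 K L (by omega) (by omega) hend
  have hbound : ∀ x ∈ {x | ∃ ω : Path K L,
      ω.FromTo (const K L 1) (const K L 2) ∧ ω.height C = x}, θ ≤ x := by
    rintro x ⟨ω, hft, rfl⟩
    obtain ⟨n, hn, hH⟩ := key ω hft
    calc θ ≤ H K L C (ω.toFun n) := hH
      _ ≤ ω.height C := by
          rw [Path.height]
          exact Finset.le_sup' (fun k => H K L C (ω.toFun k))
            (Finset.mem_range.mpr (by omega))
  have hne : {x | ∃ ω : Path K L,
      ω.FromTo (const K L 1) (const K L 2) ∧ ω.height C = x}.Nonempty :=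
    ⟨(LB.sweepPath K L).height C, ⟨LB.sweepPath K L, LB.sweepPath_fromTo K L, rfl⟩⟩
  have hPhi : θ ≤ Phi K L C (const K L 1) (const K L 2) := le_csInf hne hbound
  rw [Gamma]
  rw [hθ] at hPhi
  linarith

end GenPotts
end
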